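/- arXiv:1510.04532 — 5 statements merged into one kernel-verified Lean document; each statement's English description precedes it below -/
import Mathlib

section
/- The graphic matroid of the 3-cycle C_3 with each edge doubled (two parallel copies of each edge) is not a transversal matroid. -/
open Matroid Set

namespace IPF

variable {α : Type*}

/-- `M` is (a copy of) the uniform matroid of rank `r` on ground set `E`:
the independent sets are exactly the subsets of `E` with at most `r` elements. -/
def IsUniformOn (M : Matroid α) (E : Set α) (r : ℕ) : Prop :=
  M.E = E ∧ ∀ I : Set α, M.Indep I ↔ I ⊆ E ∧ I.Finite ∧ I.ncard ≤ r

/-- The fundamental cocircuit `C*(B;e)` of `e ∈ B` with respect to a base `B`: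
the set of all `f` such that `(B \ {e}) ∪ {f}` is a base. -/
def fundCocircuit (M : Matroid α) (B : Set α) (e : α) : Set α :=
  {f | M.IsBase (insert f (B \ {e}))}

/-- A circuit is a minimal dependent set. -/
def Circuit (M : Matroid α) (C : Set α) : Prop :=
  C ⊆ M.E ∧ ¬ M.Indep C ∧ ∀ D ⊂ C, M.Indep D

/-- `M` has rank `r` : every base has exactly `r` elements. -/
def HasRank (M : Matroid α) (r : ℕ) : Prop :=
  ∀ B, M.IsBase B → B.ncard = r

/-- A matroid is paving if every circuit has at least rank-many elements. -/
def IsPaving (M : Matroid α) : Prop :=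
  ∀ C, Circuit M C → ∀ B, M.IsBase B → B.ncard ≤ C.ncard

/-- Isomorphism of matroids: a bijection of ground sets preserving independence. -/
def IsIso {β : Type*} (M : Matroid α) (N : Matroid β) : Prop :=
  ∃ φ : M.E ≃ N.E, ∀ I : Set M.E,
    M.Indep ((↑) '' I) ↔ N.Indep ((↑) '' (φ '' I))

/-- `M` is a transversal matroid: independent sets are exactly the partial
transversals of a finite set system `A : Fin k → Set α`. -/
def IsTransversal (M : Matroid α) : Prop :=
  ∃ (k : ℕ) (A : Fin k → Set α), ∀ I : Set α,
    M.Indep I ↔ I ⊆ M.E ∧ ∃ m : α → Fin k, Set.InjOn m I ∧ ∀ x ∈ I, x ∈ A (m x)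

/-- An edge set of the multigraph with incidence map `inc` is a forest iff every finite
nonempty subset uses strictly more vertices than it has edges. -/
def IsForest {ε V : Type*} (inc : ε → Sym2 V) (I : Set ε) : Prop :=
  ∀ J ⊆ I, J.Finite → J.Nonempty → J.ncard < {v | ∃ e ∈ J, v ∈ inc e}.ncard

/-- `M` is the cycle matroid, on ground set `Eset`, of the multigraph whose edges are
`ε` with endpoints given by `inc` : independent sets are the forests inside `Eset`. -/
def IsCycleMatroidOn {ε V : Type*} (M : Matroid ε) (Eset : Set ε) (inc : ε → Sym2 V) : Prop :=
  M.E = Eset ∧ ∀ I : Set ε, M.Indep I ↔ I ⊆ Eset ∧ IsForest inc I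

/-- A matroid is graphic if it is isomorphic to the cycle matroid of some multigraph. -/
def IsGraphic (M : Matroid α) : Prop :=
  ∃ (V ε : Type) (N : Matroid ε) (inc : ε → Sym2 V),
    IsCycleMatroidOn N N.E inc ∧ IsIso M N

/-- A matroid is cographic if it is isomorphic to the dual of a graphic matroid,
equivalently its dual is graphic. -/
def IsCographic (M : Matroid α) : Prop := IsGraphic M✶

/-- Two elements are parallel if each is independent but together they are dependent. -/
def Parallel (M : Matroid α) (e f : α) : Prop :=
  e ≠ f ∧ M.Indep {e} ∧ M.Indep {f} ∧ ¬ M.Indep ({e, f} : Set α)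

/-- A parallel class: the set of all elements parallel (or equal) to a fixed nonloop. -/
def IsParallelClass (M : Matroid α) (P : Set α) : Prop :=
  ∃ e, M.Indep {e} ∧ P = {f | f = e ∨ Parallel M e f}

section Order

variable [LinearOrder α]

/-- `e` is internally active in the base `B` if `e ∈ B` is the minimum of its
fundamental cocircuit. -/
def IntActive (M : Matroid α) (B : Set α) (e : α) : Prop :=
  e ∈ B ∧ ∀ f ∈ fundCocircuit M B e, e ≤ f

/-- `S(B)` : the set of internally passive elements of the base `B`. -/
def passives (M : Matroid α) (B : Set α) : Set α :=
  {e ∈ B | ¬ IntActive M B e}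

/-- The internal order on bases: `B ≤ B'` iff `S(B) ⊆ S(B')`. -/
def intLE (M : Matroid α) (B B' : Set α) : Prop :=
  M.IsBase B ∧ M.IsBase B' ∧ passives M B ⊆ passives M B'

/-- `B` is the `f`-principal base: an internal-order-minimal base in which `f` is
internally passive. -/
def IsPrincipal (M : Matroid α) (B : Set α) (f : α) : Prop :=
  M.IsBase B ∧ f ∈ passives M B ∧
    ∀ B', M.IsBase B' → f ∈ passives M B' → passives M B ⊆ passives M B'

/-- A base `B` is internally perfect: its set `S(B)` of internally passive elements
decomposes as the disjoint union, over `f ∈ S(B)`, of the blocks `T(B;f)` given by the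
internally passive sets of the corresponding principal bases. -/
def PerfectBase (M : Matroid α) (B : Set α) : Prop :=
  M.IsBase B ∧ ∃ P : α → Set α,
    (∀ f ∈ passives M B, IsPrincipal M (P f) f) ∧
    (∀ f ∈ passives M B, ∀ g ∈ passives M B, f ≠ g →
      Disjoint (passives M (P f)) (passives M (P g))) ∧
    passives M B = ⋃ f ∈ passives M B, passives M (P f)

/-- An ordered matroid is internally perfect if every base is internally perfect. -/
def InternallyPerfect (M : Matroid α) : Prop :=
  ∀ B, M.IsBase B → PerfectBase M B

end Order

/-- The edge-incidence map of the graphs `G_r` : edges `1,2` join vertices `1,2`;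
for `j ≥ 2`, edge `2j-1` joins `j` and `j+1`, and edge `2j` joins `1` and `j+1`. -/
def incG : ℕ → Sym2 ℕ := fun e =>
  if e ≤ 2 then s(1, 2)
  else if e % 2 = 1 then s((e + 1) / 2, (e + 3) / 2)
  else s(1, (e + 2) / 2)

/-- The incidence map of `K₄`. -/
def incK4 : Fin 6 → Sym2 (Fin 4) :=
  ![s(0, 1), s(0, 2), s(0, 3), s(1, 2), s(1, 3), s(2, 3)]

/-- The incidence map of the doubled triangle `C₃²`. -/
def incC3double : Fin 6 → Sym2 (Fin 3) :=
  ![s(0, 1), s(0, 1), s(1, 2), s(1, 2), s(0, 2), s(0, 2)]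

/-- `M` is the column (vector) matroid of the matrix `A`. -/
def IsColMatroid {m n K : Type*} [Field K] (M : Matroid n) (A : Matrix m n K) : Prop :=
  M.E = univ ∧ ∀ I : Set n, M.Indep I ↔ LinearIndependent K (fun j : I => A.transpose (j : n))

lemma endpoints (x : Fin 6) : ∃ u v : Fin 3, u ≠ v ∧ u ∈ incC3double x ∧ v ∈ incC3double x := by
  fin_cases x <;> exact ⟨_, _, by decide, Sym2.mem_mk_left _ _, Sym2.mem_mk_right _ _⟩

lemma vert_lb {J : Set (Fin 6)} {x : Fin 6} (hx : x ∈ J) :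
    1 < {v | ∃ e ∈ J, v ∈ incC3double e}.ncard := by
  rw [Set.one_lt_ncard (Set.toFinite _)]
  obtain ⟨u, v, huv, hu, hv⟩ := endpoints x
  exact ⟨u, ⟨x, hx, hu⟩, v, ⟨x, hx, hv⟩, huv⟩

lemma forest_single (x : Fin 6) : IsForest incC3double {x} := by
  intro J hJ hfin hne
  rcases Set.subset_singleton_iff_eq.mp hJ with rfl | rfl
  · exact absurd hne (by simp)
  · rw [Set.ncard_singleton]; exact vert_lb rfl

lemma forest_pair {a b : Fin 6} (hab : a ≠ b)
    (h3 : ∀ w : Fin 3, ∃ e ∈ ({a, b} : Set (Fin 6)), w ∈ incC3double e) :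
    IsForest incC3double {a, b} := by
  intro J hJ hfin hne
  by_cases haJ : a ∈ J <;> by_cases hbJ : b ∈ J
  · have hJeq : J = {a, b} := Set.Subset.antisymm hJ (by
      intro x hx; rcases hx with rfl | hx
      · exact haJ
      · rcases hx with rfl; exact hbJ)
    subst hJeq
    rw [Set.ncard_pair hab, Set.two_lt_ncard (Set.toFinite _)]
    exact ⟨0, h3 0, 1, h3 1, 2, h3 2, by decide, by decide, by decide⟩
  · have hJeq : J = {a} := Set.Subset.antisymm
      (fun x hx => by rcases hJ hx with rfl | h
                      · rfl
                      · exact absurd (Set.mem_singleton_iff.mp h ▸ hx) hbJ)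
      (Set.singleton_subset_iff.mpr haJ)
    subst hJeq
    rw [Set.ncard_singleton]; exact vert_lb rfl
  · have hJeq : J = {b} := Set.Subset.antisymm
      (fun x hx => by rcases hJ hx with rfl | h
                      · exact absurd hx haJ
                      · exact h)
      (Set.singleton_subset_iff.mpr hbJ)
    subst hJeq
    rw [Set.ncard_singleton]; exact vert_lb rfl
  · obtain ⟨x, hx⟩ := hne
    rcases hJ hx with rfl | h
    · exact absurd hx haJ
    · exact absurd (Set.mem_singleton_iff.mp h ▸ hx) hbJ

/-- The cycle matroid of the doubled triangle `C₃²` is not transversal. -/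
theorem stmt6 (M : Matroid (Fin 6)) (hM : IsCycleMatroidOn M univ incC3double) :
    ¬ IsTransversal M := by
  obtain ⟨hE, hInd⟩ := hM
  have hsing : ∀ x : Fin 6, M.Indep {x} := fun x =>
    (hInd {x}).mpr ⟨by simp [hE], forest_single x⟩
  -- the three parallel pairs are dependent
  have hdep : ∀ a b : Fin 6, a ≠ b → ∀ u v : Fin 3, u ≠ v → incC3double a = s(u, v) →
      incC3double b = s(u, v) → ¬ M.Indep {a, b} := by
    intro a b hab u v huv ha hb h
    obtain ⟨-, hf⟩ := (hInd _).mp h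
    have hlt := hf {a, b} Set.Subset.rfl (Set.toFinite _) ⟨a, by simp⟩
    rw [Set.ncard_pair hab] at hlt
    have hV : {w | ∃ e ∈ ({a, b} : Set (Fin 6)), w ∈ incC3double e} = {u, v} := by
      ext w
      simp only [Set.mem_setOf_eq, Set.mem_insert_iff, Set.mem_singleton_iff,
        exists_eq_or_imp, exists_eq_left, ha, hb, Sym2.mem_iff, or_self]
    rw [hV, Set.ncard_pair huv] at hlt
    omega
  have hd01 : ¬ M.Indep {0, 1} := hdep 0 1 (by decide) 0 1 (by decide) rfl rfl
  have hd23 : ¬ M.Indep {2, 3} := hdep 2 3 (by decide) 1 2 (by decide) rfl rfl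
  have hd45 : ¬ M.Indep {4, 5} := hdep 4 5 (by decide) 0 2 (by decide) rfl rfl
  -- the triangle {0, 2, 4} is dependent
  have hd024 : ¬ M.Indep {0, 2, 4} := by
    intro h
    obtain ⟨-, hf⟩ := (hInd _).mp h
    have hlt := hf {0, 2, 4} Set.Subset.rfl (Set.toFinite _) ⟨0, by simp⟩
    have hc : ({0, 2, 4} : Set (Fin 6)).ncard = 3 := by
      rw [show ({0, 2, 4} : Set (Fin 6)) = (({0, 2, 4} : Finset (Fin 6)) : Set (Fin 6)) by simp,
        Set.ncard_coe_finset]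
      decide
    have hV : {w | ∃ e ∈ ({0, 2, 4} : Set (Fin 6)), w ∈ incC3double e} = univ := by
      ext w
      simp only [Set.mem_setOf_eq, Set.mem_insert_iff, Set.mem_singleton_iff,
        exists_eq_or_imp, exists_eq_left, Sym2.mem_iff, Set.mem_univ, iff_true]
      fin_cases w <;> simp [incC3double]
    rw [hc, hV, Set.ncard_univ, Nat.card_eq_fintype_card] at hlt
    simp at hlt
  -- independent cross pairs
  have hi02 : M.Indep {0, 2} := (hInd _).mpr ⟨by simp, forest_pair (by decide)
    (fun w => by fin_cases w <;> simp [incC3double])⟩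
  have hi24 : M.Indep {2, 4} := (hInd _).mpr ⟨by simp, forest_pair (by decide)
    (fun w => by fin_cases w <;> simp [incC3double])⟩
  have hi04 : M.Indep {0, 4} := (hInd _).mpr ⟨by simp, forest_pair (by decide)
    (fun w => by fin_cases w <;> simp [incC3double])⟩
  -- transversal argument
  rintro ⟨k, A, hA⟩
  -- representatives
  obtain ⟨-, m1, -, h1⟩ := (hA {1}).mp (hsing 1)
  obtain ⟨-, m3, -, h3⟩ := (hA {3}).mp (hsing 3)
  obtain ⟨-, m5, -, h5⟩ := (hA {5}).mp (hsing 5)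
  set r1 := m1 1 with hr1
  set r3 := m3 3 with hr3
  set r5 := m5 5 with hr5
  have hA1 : (1 : Fin 6) ∈ A r1 := h1 1 rfl
  have hA3 : (3 : Fin 6) ∈ A r3 := h3 3 rfl
  have hA5 : (5 : Fin 6) ∈ A r5 := h5 5 rfl
  -- any index containing 0 must equal r1 (else {0,1} would be independent)
  have key : ∀ (a b : Fin 6) (r : Fin k), a ≠ b → b ∈ A r → ¬ M.Indep {a, b} →
      ∀ i, a ∈ A i → i = r := by
    intro a b r hab hbr hdep i hai
    by_contra hir
    apply hdep
    rw [hA]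
    refine ⟨by simp [hE], fun x => if x = a then i else r, ?_, ?_⟩
    · intro x hx y hy hxy
      rcases hx with rfl | hx <;> rcases hy with rfl | hy
      · rfl
      · rcases hy with rfl
        simp [hab.symm, if_neg] at hxy
        exact absurd hxy hir
      · rcases hx with rfl
        simp [hab.symm] at hxy
        exact absurd hxy.symm hir
      · rcases hx with rfl; rcases hy with rfl; rfl
    · intro x hx
      rcases hx with rfl | hx
      · simpa using hai
      · rcases hx with rfl
        simp [hab.symm]
        exact hbr
  have k0 : ∀ i, (0 : Fin 6) ∈ A i → i = r1 := key 0 1 r1 (by decide) hA1 hd01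
  have k2 : ∀ i, (2 : Fin 6) ∈ A i → i = r3 := key 2 3 r3 (by decide) hA3 hd23
  have k4 : ∀ i, (4 : Fin 6) ∈ A i → i = r5 := key 4 5 r5 (by decide) hA5 hd45
  -- distinctness of r1, r3, r5 from independence of cross pairs
  have dist : ∀ (a b : Fin 6) (r s : Fin k), a ≠ b → M.Indep {a, b} →
      (∀ i, a ∈ A i → i = r) → (∀ i, b ∈ A i → i = s) → r ≠ s := by
    intro a b r s hab hind hr hs
    obtain ⟨-, m, hinj, hm⟩ := (hA _).mp hind
    have hma : m a = r := hr _ (hm a (by simp))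
    have hmb : m b = s := hs _ (hm b (by simp))
    intro hrs
    exact hab (hinj (by simp) (by simp) (by rw [hma, hmb, hrs]))
  have d13 : r1 ≠ r3 := dist 0 2 r1 r3 (by decide) hi02 k0 k2
  have d35 : r3 ≠ r5 := dist 2 4 r3 r5 (by decide) hi24 k2 k4
  have d15 : r1 ≠ r5 := dist 0 4 r1 r5 (by decide) hi04 k0 k4
  -- membership of 0, 2, 4
  obtain ⟨-, n0, -, hn0⟩ := (hA {0}).mp (hsing 0)
  obtain ⟨-, n2, -, hn2⟩ := (hA {2}).mp (hsing 2)
  obtain ⟨-, n4, -, hn4⟩ := (hA {4}).mp (hsing 4)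
  have hA0 : (0 : Fin 6) ∈ A r1 := (k0 _ (hn0 0 rfl)) ▸ hn0 0 rfl
  have hA2 : (2 : Fin 6) ∈ A r3 := (k2 _ (hn2 2 rfl)) ▸ hn2 2 rfl
  have hA4 : (4 : Fin 6) ∈ A r5 := (k4 _ (hn4 4 rfl)) ▸ hn4 4 rfl
  -- now {0, 2, 4} is a partial transversal, contradiction
  apply hd024
  rw [hA]
  refine ⟨by simp [hE], fun x => if x = 0 then r1 else if x = 2 then r3 else r5, ?_, ?_⟩
  · intro x hx y hy hxy
    have hx' : x = 0 ∨ x = 2 ∨ x = 4 := by simpa using hx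
    have hy' : y = 0 ∨ y = 2 ∨ y = 4 := by simpa using hy
    simp only [] at hxy
    rcases hx' with rfl | rfl | rfl <;> rcases hy' with rfl | rfl | rfl <;>
      simp only [if_pos rfl, if_neg (show (2 : Fin 6) ≠ 0 by decide),
        if_neg (show (4 : Fin 6) ≠ 0 by decide), if_neg (show (4 : Fin 6) ≠ 2 by decide)] at hxy <;>
      first
        | rfl
        | exact absurd hxy d13
        | exact absurd hxy d13.symm
        | exact absurd hxy d35
        | exact absurd hxy d35.symm
        | exact absurd hxy d15
        | exact absurd hxy d15.symm
  · intro x hx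
    have hx' : x = 0 ∨ x = 2 ∨ x = 4 := by simpa using hx
    rcases hx' with rfl | rfl | rfl <;>
      simp only [if_pos rfl, if_neg (show (2 : Fin 6) ≠ 0 by decide),
        if_neg (show (4 : Fin 6) ≠ 0 by decide), if_neg (show (4 : Fin 6) ≠ 2 by decide)]
    · exact hA0
    · exact hA2
    · exact hA4


end IPF
end

section
/- The dual of the vector matroid of the matrix N = [[2,1,3,3,-1,-1,0,0,-1,-1],[1,1,1,1,1,1,1,1,0,0],[0,0,0,0,0,0,-1,-1,1,1]] over ℚ has exactly the following circuits: {1,2,3,4}, {1,2,5,6,7,8}, {1,3,4,5,6,7,8}, {2,3,4,5,6,7,8}, {1,2,5,6,9,10}, {1,3,4,5,6,9,10}, {2,3,4,5,6,9,10}, {7,8,9,10} (elements labelled by column index). -/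
open Matroid Set

namespace IPF
set_option maxRecDepth 1500

variable {α : Type*}

/-- The matrix `N` from the paper. -/
noncomputable def Nmat : Matrix (Fin 3) (Fin 10) ℚ :=
  !![2, 1, 3, 3, -1, -1, 0, 0, -1, -1;
     1, 1, 1, 1, 1, 1, 1, 1, 0, 0;
     0, 0, 0, 0, 0, 0, -1, -1, 1, 1]

lemma hc0 : Nmat.transpose 0 = ![2,1,0] := by funext r; fin_cases r <;> rfl
lemma hc1 : Nmat.transpose 1 = ![1,1,0] := by funext r; fin_cases r <;> rfl
lemma hc2 : Nmat.transpose 2 = ![3,1,0] := by funext r; fin_cases r <;> rfl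
lemma hc3 : Nmat.transpose 3 = ![3,1,0] := by funext r; fin_cases r <;> rfl
lemma hc4 : Nmat.transpose 4 = ![-1,1,0] := by funext r; fin_cases r <;> rfl
lemma hc5 : Nmat.transpose 5 = ![-1,1,0] := by funext r; fin_cases r <;> rfl
lemma hc6 : Nmat.transpose 6 = ![0,1,-1] := by funext r; fin_cases r <;> rfl
lemma hc7 : Nmat.transpose 7 = ![0,1,-1] := by funext r; fin_cases r <;> rfl
lemma hc8 : Nmat.transpose 8 = ![-1,0,1] := by funext r; fin_cases r <;> rfl
lemma hc9 : Nmat.transpose 9 = ![-1,0,1] := by funext r; fin_cases r <;> rfl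

lemma tripleEquiv (i j k : Fin 10) (hij : i ≠ j) (hik : i ≠ k) (hjk : j ≠ k) :
    LinearIndependent ℚ (fun x : (↑({i,j,k} : Finset (Fin 10)) : Set (Fin 10)) => Nmat.transpose (x : Fin 10))
      ↔ (Matrix.of ![Nmat.transpose i, Nmat.transpose j, Nmat.transpose k]).det ≠ 0 := by
  have hmem : ∀ r : Fin 3, (![i,j,k] r) ∈ (↑({i,j,k} : Finset (Fin 10)) : Set (Fin 10)) := by
    intro r; fin_cases r <;> simp
  let e : Fin 3 ≃ (↑({i,j,k} : Finset (Fin 10)) : Set (Fin 10)) :=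
    Equiv.ofBijective (fun r => ⟨![i,j,k] r, hmem r⟩)
      ⟨by intro a b hab; fin_cases a <;> fin_cases b <;> simp_all,
       by rintro ⟨x, hx⟩
          simp only [Finset.coe_insert, Set.mem_insert_iff, Finset.coe_singleton,
            Set.mem_singleton_iff] at hx
          rcases hx with rfl|rfl|rfl
          exacts [⟨0, rfl⟩, ⟨1, rfl⟩, ⟨2, rfl⟩]⟩
  rw [← linearIndependent_equiv e, show (fun x : (↑({i,j,k} : Finset (Fin 10)) : Set (Fin 10)) => Nmat.transpose (x : Fin 10)) ∘ e
      = fun r => (Matrix.of ![Nmat.transpose i, Nmat.transpose j, Nmat.transpose k]) r from by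
      funext r; fin_cases r <;> rfl]
  rw [← Matrix.row_def, Matrix.linearIndependent_rows_iff_isUnit, Matrix.isUnit_iff_isUnit_det, isUnit_iff_ne_zero]

lemma pairDep (i j : Fin 10) (hij : i ≠ j) (hc : Nmat.transpose i = Nmat.transpose j) :
    ¬ LinearIndependent ℚ (fun x : (↑({i,j} : Finset (Fin 10)) : Set (Fin 10)) => Nmat.transpose (x : Fin 10)) := by
  intro h
  have := h.injective (a₁ := ⟨i, by simp⟩) (a₂ := ⟨j, by simp⟩) (by simpa using hc)
  simp only [Subtype.mk.injEq] at this
  exact hij this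

lemma cardLe (s : Finset (Fin 10))
    (h : LinearIndependent ℚ (fun x : (↑s : Set (Fin 10)) => Nmat.transpose (x : Fin 10))) :
    s.card ≤ 3 := by
  have := h.fintype_card_le_finrank
  rw [Module.finrank_fin_fun] at this
  calc s.card = (↑s : Set (Fin 10)).ncard := by rw [Set.ncard_coe_finset]
    _ = Fintype.card ↑(↑s : Set (Fin 10)) := by rw [← Nat.card_coe_set_eq, Nat.card_eq_fintype_card]
    _ ≤ 3 := this

lemma liMono {I T : Set (Fin 10)} (h : I ⊆ T)
    (hT : LinearIndependent ℚ (fun x : T => Nmat.transpose (x : Fin 10))) :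
    LinearIndependent ℚ (fun x : I => Nmat.transpose (x : Fin 10)) :=
  hT.comp (Set.inclusion h) (Set.inclusion_injective h)

def triples : List (Fin 10 × Fin 10 × Fin 10) := [(0,1,6), (0,1,7), (0,1,8), (0,1,9), (0,2,6), (0,2,7), (0,2,8), (0,2,9), (0,3,6), (0,3,7), (0,3,8), (0,3,9), (0,4,6), (0,4,7), (0,4,8), (0,4,9), (0,5,6), (0,5,7), (0,5,8), (0,5,9), (0,6,8), (0,6,9), (0,7,8), (0,7,9), (1,2,6), (1,2,7), (1,2,8), (1,2,9), (1,3,6), (1,3,7), (1,3,8), (1,3,9), (1,4,6), (1,4,7), (1,4,8), (1,4,9), (1,5,6), (1,5,7), (1,5,8), (1,5,9), (1,6,8), (1,6,9), (1,7,8), (1,7,9), (2,4,6), (2,4,7), (2,4,8), (2,4,9), (2,5,6), (2,5,7), (2,5,8), (2,5,9), (2,6,8), (2,6,9), (2,7,8), (2,7,9), (3,4,6), (3,4,7), (3,4,8), (3,4,9), (3,5,6), (3,5,7), (3,5,8), (3,5,9), (3,6,8), (3,6,9), (3,7,8), (3,7,9)]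
def depsT : List (Fin 10 × Fin 10 × Fin 10) := [(0,1,2), (0,1,3), (0,1,4), (0,1,5), (0,2,4), (0,2,5), (0,3,4), (0,3,5), (1,2,4), (1,2,5), (1,3,4), (1,3,5), (4,6,8), (4,6,9), (4,7,8), (4,7,9), (5,6,8), (5,6,9), (5,7,8), (5,7,9)]
def depsP : List (Fin 10 × Fin 10) := [(2,3), (4,5), (6,7), (8,9)]

def subT (F : Fin 10 → Bool) (t : Fin 10 × Fin 10 × Fin 10) : Bool :=
  (List.finRange 10).all (fun i => !F i || (i == t.1 || i == t.2.1 || i == t.2.2))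
def goodF (F : Fin 10 → Bool) : Bool := triples.any (subT F)
def depF (F : Fin 10 → Bool) : Bool :=
  depsP.any (fun p => F p.1 && F p.2) || depsT.any (fun t => F t.1 && F t.2.1 && F t.2.2)
def cnt (F : Fin 10 → Bool) : ℕ := (List.finRange 10).countP F
def DF (F : Fin 10 → Bool) : Bool := triples.any (fun t => !F t.1 && !F t.2.1 && !F t.2.2)

lemma triples_card : ∀ tr ∈ triples, ({tr.1, tr.2.1, tr.2.2} : Finset (Fin 10)).card = 3 := by
  intro tr htr
  simp only [triples, List.mem_cons, List.not_mem_nil, or_false] at htr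
  rcases htr with rfl|rfl|rfl|rfl|rfl|rfl|rfl|rfl|rfl|rfl|rfl|rfl|rfl|rfl|rfl|rfl|rfl|rfl|rfl|rfl|rfl|rfl|rfl|rfl|rfl|rfl|rfl|rfl|rfl|rfl|rfl|rfl|rfl|rfl|rfl|rfl|rfl|rfl|rfl|rfl|rfl|rfl|rfl|rfl|rfl|rfl|rfl|rfl|rfl|rfl|rfl|rfl|rfl|rfl|rfl|rfl|rfl|rfl|rfl|rfl|rfl|rfl|rfl|rfl|rfl|rfl|rfl|rfl <;> decide

lemma bases_indep : ∀ tr ∈ triples, LinearIndependent ℚ (fun x : (↑({tr.1, tr.2.1, tr.2.2} : Finset (Fin 10)) : Set (Fin 10)) => Nmat.transpose (x : Fin 10)) := by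
  intro tr htr
  simp only [triples, List.mem_cons, List.not_mem_nil, or_false] at htr
  rcases htr with rfl|rfl|rfl|rfl|rfl|rfl|rfl|rfl|rfl|rfl|rfl|rfl|rfl|rfl|rfl|rfl|rfl|rfl|rfl|rfl|rfl|rfl|rfl|rfl|rfl|rfl|rfl|rfl|rfl|rfl|rfl|rfl|rfl|rfl|rfl|rfl|rfl|rfl|rfl|rfl|rfl|rfl|rfl|rfl|rfl|rfl|rfl|rfl|rfl|rfl|rfl|rfl|rfl|rfl|rfl|rfl|rfl|rfl|rfl|rfl|rfl|rfl|rfl|rfl|rfl|rfl|rfl|rfl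
  · exact (tripleEquiv 0 1 6 (by decide) (by decide) (by decide)).2 (by rw [hc0, hc1, hc6]; norm_num [Matrix.det_fin_three, Matrix.vecHead, Matrix.vecTail, Matrix.cons_val_two])
  · exact (tripleEquiv 0 1 7 (by decide) (by decide) (by decide)).2 (by rw [hc0, hc1, hc7]; norm_num [Matrix.det_fin_three, Matrix.vecHead, Matrix.vecTail, Matrix.cons_val_two])
  · exact (tripleEquiv 0 1 8 (by decide) (by decide) (by decide)).2 (by rw [hc0, hc1, hc8]; norm_num [Matrix.det_fin_three, Matrix.vecHead, Matrix.vecTail, Matrix.cons_val_two])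
  · exact (tripleEquiv 0 1 9 (by decide) (by decide) (by decide)).2 (by rw [hc0, hc1, hc9]; norm_num [Matrix.det_fin_three, Matrix.vecHead, Matrix.vecTail, Matrix.cons_val_two])
  · exact (tripleEquiv 0 2 6 (by decide) (by decide) (by decide)).2 (by rw [hc0, hc2, hc6]; norm_num [Matrix.det_fin_three, Matrix.vecHead, Matrix.vecTail, Matrix.cons_val_two])
  · exact (tripleEquiv 0 2 7 (by decide) (by decide) (by decide)).2 (by rw [hc0, hc2, hc7]; norm_num [Matrix.det_fin_three, Matrix.vecHead, Matrix.vecTail, Matrix.cons_val_two])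
  · exact (tripleEquiv 0 2 8 (by decide) (by decide) (by decide)).2 (by rw [hc0, hc2, hc8]; norm_num [Matrix.det_fin_three, Matrix.vecHead, Matrix.vecTail, Matrix.cons_val_two])
  · exact (tripleEquiv 0 2 9 (by decide) (by decide) (by decide)).2 (by rw [hc0, hc2, hc9]; norm_num [Matrix.det_fin_three, Matrix.vecHead, Matrix.vecTail, Matrix.cons_val_two])
  · exact (tripleEquiv 0 3 6 (by decide) (by decide) (by decide)).2 (by rw [hc0, hc3, hc6]; norm_num [Matrix.det_fin_three, Matrix.vecHead, Matrix.vecTail, Matrix.cons_val_two])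
  · exact (tripleEquiv 0 3 7 (by decide) (by decide) (by decide)).2 (by rw [hc0, hc3, hc7]; norm_num [Matrix.det_fin_three, Matrix.vecHead, Matrix.vecTail, Matrix.cons_val_two])
  · exact (tripleEquiv 0 3 8 (by decide) (by decide) (by decide)).2 (by rw [hc0, hc3, hc8]; norm_num [Matrix.det_fin_three, Matrix.vecHead, Matrix.vecTail, Matrix.cons_val_two])
  · exact (tripleEquiv 0 3 9 (by decide) (by decide) (by decide)).2 (by rw [hc0, hc3, hc9]; norm_num [Matrix.det_fin_three, Matrix.vecHead, Matrix.vecTail, Matrix.cons_val_two])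
  · exact (tripleEquiv 0 4 6 (by decide) (by decide) (by decide)).2 (by rw [hc0, hc4, hc6]; norm_num [Matrix.det_fin_three, Matrix.vecHead, Matrix.vecTail, Matrix.cons_val_two])
  · exact (tripleEquiv 0 4 7 (by decide) (by decide) (by decide)).2 (by rw [hc0, hc4, hc7]; norm_num [Matrix.det_fin_three, Matrix.vecHead, Matrix.vecTail, Matrix.cons_val_two])
  · exact (tripleEquiv 0 4 8 (by decide) (by decide) (by decide)).2 (by rw [hc0, hc4, hc8]; norm_num [Matrix.det_fin_three, Matrix.vecHead, Matrix.vecTail, Matrix.cons_val_two])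
  · exact (tripleEquiv 0 4 9 (by decide) (by decide) (by decide)).2 (by rw [hc0, hc4, hc9]; norm_num [Matrix.det_fin_three, Matrix.vecHead, Matrix.vecTail, Matrix.cons_val_two])
  · exact (tripleEquiv 0 5 6 (by decide) (by decide) (by decide)).2 (by rw [hc0, hc5, hc6]; norm_num [Matrix.det_fin_three, Matrix.vecHead, Matrix.vecTail, Matrix.cons_val_two])
  · exact (tripleEquiv 0 5 7 (by decide) (by decide) (by decide)).2 (by rw [hc0, hc5, hc7]; norm_num [Matrix.det_fin_three, Matrix.vecHead, Matrix.vecTail, Matrix.cons_val_two])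
  · exact (tripleEquiv 0 5 8 (by decide) (by decide) (by decide)).2 (by rw [hc0, hc5, hc8]; norm_num [Matrix.det_fin_three, Matrix.vecHead, Matrix.vecTail, Matrix.cons_val_two])
  · exact (tripleEquiv 0 5 9 (by decide) (by decide) (by decide)).2 (by rw [hc0, hc5, hc9]; norm_num [Matrix.det_fin_three, Matrix.vecHead, Matrix.vecTail, Matrix.cons_val_two])
  · exact (tripleEquiv 0 6 8 (by decide) (by decide) (by decide)).2 (by rw [hc0, hc6, hc8]; norm_num [Matrix.det_fin_three, Matrix.vecHead, Matrix.vecTail, Matrix.cons_val_two])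
  · exact (tripleEquiv 0 6 9 (by decide) (by decide) (by decide)).2 (by rw [hc0, hc6, hc9]; norm_num [Matrix.det_fin_three, Matrix.vecHead, Matrix.vecTail, Matrix.cons_val_two])
  · exact (tripleEquiv 0 7 8 (by decide) (by decide) (by decide)).2 (by rw [hc0, hc7, hc8]; norm_num [Matrix.det_fin_three, Matrix.vecHead, Matrix.vecTail, Matrix.cons_val_two])
  · exact (tripleEquiv 0 7 9 (by decide) (by decide) (by decide)).2 (by rw [hc0, hc7, hc9]; norm_num [Matrix.det_fin_three, Matrix.vecHead, Matrix.vecTail, Matrix.cons_val_two])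
  · exact (tripleEquiv 1 2 6 (by decide) (by decide) (by decide)).2 (by rw [hc1, hc2, hc6]; norm_num [Matrix.det_fin_three, Matrix.vecHead, Matrix.vecTail, Matrix.cons_val_two])
  · exact (tripleEquiv 1 2 7 (by decide) (by decide) (by decide)).2 (by rw [hc1, hc2, hc7]; norm_num [Matrix.det_fin_three, Matrix.vecHead, Matrix.vecTail, Matrix.cons_val_two])
  · exact (tripleEquiv 1 2 8 (by decide) (by decide) (by decide)).2 (by rw [hc1, hc2, hc8]; norm_num [Matrix.det_fin_three, Matrix.vecHead, Matrix.vecTail, Matrix.cons_val_two])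
  · exact (tripleEquiv 1 2 9 (by decide) (by decide) (by decide)).2 (by rw [hc1, hc2, hc9]; norm_num [Matrix.det_fin_three, Matrix.vecHead, Matrix.vecTail, Matrix.cons_val_two])
  · exact (tripleEquiv 1 3 6 (by decide) (by decide) (by decide)).2 (by rw [hc1, hc3, hc6]; norm_num [Matrix.det_fin_three, Matrix.vecHead, Matrix.vecTail, Matrix.cons_val_two])
  · exact (tripleEquiv 1 3 7 (by decide) (by decide) (by decide)).2 (by rw [hc1, hc3, hc7]; norm_num [Matrix.det_fin_three, Matrix.vecHead, Matrix.vecTail, Matrix.cons_val_two])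
  · exact (tripleEquiv 1 3 8 (by decide) (by decide) (by decide)).2 (by rw [hc1, hc3, hc8]; norm_num [Matrix.det_fin_three, Matrix.vecHead, Matrix.vecTail, Matrix.cons_val_two])
  · exact (tripleEquiv 1 3 9 (by decide) (by decide) (by decide)).2 (by rw [hc1, hc3, hc9]; norm_num [Matrix.det_fin_three, Matrix.vecHead, Matrix.vecTail, Matrix.cons_val_two])
  · exact (tripleEquiv 1 4 6 (by decide) (by decide) (by decide)).2 (by rw [hc1, hc4, hc6]; norm_num [Matrix.det_fin_three, Matrix.vecHead, Matrix.vecTail, Matrix.cons_val_two])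
  · exact (tripleEquiv 1 4 7 (by decide) (by decide) (by decide)).2 (by rw [hc1, hc4, hc7]; norm_num [Matrix.det_fin_three, Matrix.vecHead, Matrix.vecTail, Matrix.cons_val_two])
  · exact (tripleEquiv 1 4 8 (by decide) (by decide) (by decide)).2 (by rw [hc1, hc4, hc8]; norm_num [Matrix.det_fin_three, Matrix.vecHead, Matrix.vecTail, Matrix.cons_val_two])
  · exact (tripleEquiv 1 4 9 (by decide) (by decide) (by decide)).2 (by rw [hc1, hc4, hc9]; norm_num [Matrix.det_fin_three, Matrix.vecHead, Matrix.vecTail, Matrix.cons_val_two])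
  · exact (tripleEquiv 1 5 6 (by decide) (by decide) (by decide)).2 (by rw [hc1, hc5, hc6]; norm_num [Matrix.det_fin_three, Matrix.vecHead, Matrix.vecTail, Matrix.cons_val_two])
  · exact (tripleEquiv 1 5 7 (by decide) (by decide) (by decide)).2 (by rw [hc1, hc5, hc7]; norm_num [Matrix.det_fin_three, Matrix.vecHead, Matrix.vecTail, Matrix.cons_val_two])
  · exact (tripleEquiv 1 5 8 (by decide) (by decide) (by decide)).2 (by rw [hc1, hc5, hc8]; norm_num [Matrix.det_fin_three, Matrix.vecHead, Matrix.vecTail, Matrix.cons_val_two])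
  · exact (tripleEquiv 1 5 9 (by decide) (by decide) (by decide)).2 (by rw [hc1, hc5, hc9]; norm_num [Matrix.det_fin_three, Matrix.vecHead, Matrix.vecTail, Matrix.cons_val_two])
  · exact (tripleEquiv 1 6 8 (by decide) (by decide) (by decide)).2 (by rw [hc1, hc6, hc8]; norm_num [Matrix.det_fin_three, Matrix.vecHead, Matrix.vecTail, Matrix.cons_val_two])
  · exact (tripleEquiv 1 6 9 (by decide) (by decide) (by decide)).2 (by rw [hc1, hc6, hc9]; norm_num [Matrix.det_fin_three, Matrix.vecHead, Matrix.vecTail, Matrix.cons_val_two])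
  · exact (tripleEquiv 1 7 8 (by decide) (by decide) (by decide)).2 (by rw [hc1, hc7, hc8]; norm_num [Matrix.det_fin_three, Matrix.vecHead, Matrix.vecTail, Matrix.cons_val_two])
  · exact (tripleEquiv 1 7 9 (by decide) (by decide) (by decide)).2 (by rw [hc1, hc7, hc9]; norm_num [Matrix.det_fin_three, Matrix.vecHead, Matrix.vecTail, Matrix.cons_val_two])
  · exact (tripleEquiv 2 4 6 (by decide) (by decide) (by decide)).2 (by rw [hc2, hc4, hc6]; norm_num [Matrix.det_fin_three, Matrix.vecHead, Matrix.vecTail, Matrix.cons_val_two])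
  · exact (tripleEquiv 2 4 7 (by decide) (by decide) (by decide)).2 (by rw [hc2, hc4, hc7]; norm_num [Matrix.det_fin_three, Matrix.vecHead, Matrix.vecTail, Matrix.cons_val_two])
  · exact (tripleEquiv 2 4 8 (by decide) (by decide) (by decide)).2 (by rw [hc2, hc4, hc8]; norm_num [Matrix.det_fin_three, Matrix.vecHead, Matrix.vecTail, Matrix.cons_val_two])
  · exact (tripleEquiv 2 4 9 (by decide) (by decide) (by decide)).2 (by rw [hc2, hc4, hc9]; norm_num [Matrix.det_fin_three, Matrix.vecHead, Matrix.vecTail, Matrix.cons_val_two])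
  · exact (tripleEquiv 2 5 6 (by decide) (by decide) (by decide)).2 (by rw [hc2, hc5, hc6]; norm_num [Matrix.det_fin_three, Matrix.vecHead, Matrix.vecTail, Matrix.cons_val_two])
  · exact (tripleEquiv 2 5 7 (by decide) (by decide) (by decide)).2 (by rw [hc2, hc5, hc7]; norm_num [Matrix.det_fin_three, Matrix.vecHead, Matrix.vecTail, Matrix.cons_val_two])
  · exact (tripleEquiv 2 5 8 (by decide) (by decide) (by decide)).2 (by rw [hc2, hc5, hc8]; norm_num [Matrix.det_fin_three, Matrix.vecHead, Matrix.vecTail, Matrix.cons_val_two])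
  · exact (tripleEquiv 2 5 9 (by decide) (by decide) (by decide)).2 (by rw [hc2, hc5, hc9]; norm_num [Matrix.det_fin_three, Matrix.vecHead, Matrix.vecTail, Matrix.cons_val_two])
  · exact (tripleEquiv 2 6 8 (by decide) (by decide) (by decide)).2 (by rw [hc2, hc6, hc8]; norm_num [Matrix.det_fin_three, Matrix.vecHead, Matrix.vecTail, Matrix.cons_val_two])
  · exact (tripleEquiv 2 6 9 (by decide) (by decide) (by decide)).2 (by rw [hc2, hc6, hc9]; norm_num [Matrix.det_fin_three, Matrix.vecHead, Matrix.vecTail, Matrix.cons_val_two])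
  · exact (tripleEquiv 2 7 8 (by decide) (by decide) (by decide)).2 (by rw [hc2, hc7, hc8]; norm_num [Matrix.det_fin_three, Matrix.vecHead, Matrix.vecTail, Matrix.cons_val_two])
  · exact (tripleEquiv 2 7 9 (by decide) (by decide) (by decide)).2 (by rw [hc2, hc7, hc9]; norm_num [Matrix.det_fin_three, Matrix.vecHead, Matrix.vecTail, Matrix.cons_val_two])
  · exact (tripleEquiv 3 4 6 (by decide) (by decide) (by decide)).2 (by rw [hc3, hc4, hc6]; norm_num [Matrix.det_fin_three, Matrix.vecHead, Matrix.vecTail, Matrix.cons_val_two])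
  · exact (tripleEquiv 3 4 7 (by decide) (by decide) (by decide)).2 (by rw [hc3, hc4, hc7]; norm_num [Matrix.det_fin_three, Matrix.vecHead, Matrix.vecTail, Matrix.cons_val_two])
  · exact (tripleEquiv 3 4 8 (by decide) (by decide) (by decide)).2 (by rw [hc3, hc4, hc8]; norm_num [Matrix.det_fin_three, Matrix.vecHead, Matrix.vecTail, Matrix.cons_val_two])
  · exact (tripleEquiv 3 4 9 (by decide) (by decide) (by decide)).2 (by rw [hc3, hc4, hc9]; norm_num [Matrix.det_fin_three, Matrix.vecHead, Matrix.vecTail, Matrix.cons_val_two])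
  · exact (tripleEquiv 3 5 6 (by decide) (by decide) (by decide)).2 (by rw [hc3, hc5, hc6]; norm_num [Matrix.det_fin_three, Matrix.vecHead, Matrix.vecTail, Matrix.cons_val_two])
  · exact (tripleEquiv 3 5 7 (by decide) (by decide) (by decide)).2 (by rw [hc3, hc5, hc7]; norm_num [Matrix.det_fin_three, Matrix.vecHead, Matrix.vecTail, Matrix.cons_val_two])
  · exact (tripleEquiv 3 5 8 (by decide) (by decide) (by decide)).2 (by rw [hc3, hc5, hc8]; norm_num [Matrix.det_fin_three, Matrix.vecHead, Matrix.vecTail, Matrix.cons_val_two])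
  · exact (tripleEquiv 3 5 9 (by decide) (by decide) (by decide)).2 (by rw [hc3, hc5, hc9]; norm_num [Matrix.det_fin_three, Matrix.vecHead, Matrix.vecTail, Matrix.cons_val_two])
  · exact (tripleEquiv 3 6 8 (by decide) (by decide) (by decide)).2 (by rw [hc3, hc6, hc8]; norm_num [Matrix.det_fin_three, Matrix.vecHead, Matrix.vecTail, Matrix.cons_val_two])
  · exact (tripleEquiv 3 6 9 (by decide) (by decide) (by decide)).2 (by rw [hc3, hc6, hc9]; norm_num [Matrix.det_fin_three, Matrix.vecHead, Matrix.vecTail, Matrix.cons_val_two])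
  · exact (tripleEquiv 3 7 8 (by decide) (by decide) (by decide)).2 (by rw [hc3, hc7, hc8]; norm_num [Matrix.det_fin_three, Matrix.vecHead, Matrix.vecTail, Matrix.cons_val_two])
  · exact (tripleEquiv 3 7 9 (by decide) (by decide) (by decide)).2 (by rw [hc3, hc7, hc9]; norm_num [Matrix.det_fin_three, Matrix.vecHead, Matrix.vecTail, Matrix.cons_val_two])
lemma depsT_dep : ∀ tr ∈ depsT, ¬ LinearIndependent ℚ (fun x : (↑({tr.1, tr.2.1, tr.2.2} : Finset (Fin 10)) : Set (Fin 10)) => Nmat.transpose (x : Fin 10)) := by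
  intro tr htr
  simp only [depsT, List.mem_cons, List.not_mem_nil, or_false] at htr
  rcases htr with rfl|rfl|rfl|rfl|rfl|rfl|rfl|rfl|rfl|rfl|rfl|rfl|rfl|rfl|rfl|rfl|rfl|rfl|rfl|rfl
  · exact fun h => (tripleEquiv 0 1 2 (by decide) (by decide) (by decide)).1 h (by rw [hc0, hc1, hc2]; norm_num [Matrix.det_fin_three, Matrix.vecHead, Matrix.vecTail, Matrix.cons_val_two])
  · exact fun h => (tripleEquiv 0 1 3 (by decide) (by decide) (by decide)).1 h (by rw [hc0, hc1, hc3]; norm_num [Matrix.det_fin_three, Matrix.vecHead, Matrix.vecTail, Matrix.cons_val_two])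
  · exact fun h => (tripleEquiv 0 1 4 (by decide) (by decide) (by decide)).1 h (by rw [hc0, hc1, hc4]; norm_num [Matrix.det_fin_three, Matrix.vecHead, Matrix.vecTail, Matrix.cons_val_two])
  · exact fun h => (tripleEquiv 0 1 5 (by decide) (by decide) (by decide)).1 h (by rw [hc0, hc1, hc5]; norm_num [Matrix.det_fin_three, Matrix.vecHead, Matrix.vecTail, Matrix.cons_val_two])
  · exact fun h => (tripleEquiv 0 2 4 (by decide) (by decide) (by decide)).1 h (by rw [hc0, hc2, hc4]; norm_num [Matrix.det_fin_three, Matrix.vecHead, Matrix.vecTail, Matrix.cons_val_two])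
  · exact fun h => (tripleEquiv 0 2 5 (by decide) (by decide) (by decide)).1 h (by rw [hc0, hc2, hc5]; norm_num [Matrix.det_fin_three, Matrix.vecHead, Matrix.vecTail, Matrix.cons_val_two])
  · exact fun h => (tripleEquiv 0 3 4 (by decide) (by decide) (by decide)).1 h (by rw [hc0, hc3, hc4]; norm_num [Matrix.det_fin_three, Matrix.vecHead, Matrix.vecTail, Matrix.cons_val_two])
  · exact fun h => (tripleEquiv 0 3 5 (by decide) (by decide) (by decide)).1 h (by rw [hc0, hc3, hc5]; norm_num [Matrix.det_fin_three, Matrix.vecHead, Matrix.vecTail, Matrix.cons_val_two])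
  · exact fun h => (tripleEquiv 1 2 4 (by decide) (by decide) (by decide)).1 h (by rw [hc1, hc2, hc4]; norm_num [Matrix.det_fin_three, Matrix.vecHead, Matrix.vecTail, Matrix.cons_val_two])
  · exact fun h => (tripleEquiv 1 2 5 (by decide) (by decide) (by decide)).1 h (by rw [hc1, hc2, hc5]; norm_num [Matrix.det_fin_three, Matrix.vecHead, Matrix.vecTail, Matrix.cons_val_two])
  · exact fun h => (tripleEquiv 1 3 4 (by decide) (by decide) (by decide)).1 h (by rw [hc1, hc3, hc4]; norm_num [Matrix.det_fin_three, Matrix.vecHead, Matrix.vecTail, Matrix.cons_val_two])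
  · exact fun h => (tripleEquiv 1 3 5 (by decide) (by decide) (by decide)).1 h (by rw [hc1, hc3, hc5]; norm_num [Matrix.det_fin_three, Matrix.vecHead, Matrix.vecTail, Matrix.cons_val_two])
  · exact fun h => (tripleEquiv 4 6 8 (by decide) (by decide) (by decide)).1 h (by rw [hc4, hc6, hc8]; norm_num [Matrix.det_fin_three, Matrix.vecHead, Matrix.vecTail, Matrix.cons_val_two])
  · exact fun h => (tripleEquiv 4 6 9 (by decide) (by decide) (by decide)).1 h (by rw [hc4, hc6, hc9]; norm_num [Matrix.det_fin_three, Matrix.vecHead, Matrix.vecTail, Matrix.cons_val_two])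
  · exact fun h => (tripleEquiv 4 7 8 (by decide) (by decide) (by decide)).1 h (by rw [hc4, hc7, hc8]; norm_num [Matrix.det_fin_three, Matrix.vecHead, Matrix.vecTail, Matrix.cons_val_two])
  · exact fun h => (tripleEquiv 4 7 9 (by decide) (by decide) (by decide)).1 h (by rw [hc4, hc7, hc9]; norm_num [Matrix.det_fin_three, Matrix.vecHead, Matrix.vecTail, Matrix.cons_val_two])
  · exact fun h => (tripleEquiv 5 6 8 (by decide) (by decide) (by decide)).1 h (by rw [hc5, hc6, hc8]; norm_num [Matrix.det_fin_three, Matrix.vecHead, Matrix.vecTail, Matrix.cons_val_two])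
  · exact fun h => (tripleEquiv 5 6 9 (by decide) (by decide) (by decide)).1 h (by rw [hc5, hc6, hc9]; norm_num [Matrix.det_fin_three, Matrix.vecHead, Matrix.vecTail, Matrix.cons_val_two])
  · exact fun h => (tripleEquiv 5 7 8 (by decide) (by decide) (by decide)).1 h (by rw [hc5, hc7, hc8]; norm_num [Matrix.det_fin_three, Matrix.vecHead, Matrix.vecTail, Matrix.cons_val_two])
  · exact fun h => (tripleEquiv 5 7 9 (by decide) (by decide) (by decide)).1 h (by rw [hc5, hc7, hc9]; norm_num [Matrix.det_fin_three, Matrix.vecHead, Matrix.vecTail, Matrix.cons_val_two])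
lemma depsP_dep : ∀ p ∈ depsP, ¬ LinearIndependent ℚ (fun x : (↑({p.1, p.2} : Finset (Fin 10)) : Set (Fin 10)) => Nmat.transpose (x : Fin 10)) := by
  intro p hp
  simp only [depsP, List.mem_cons, List.not_mem_nil, or_false] at hp
  rcases hp with rfl|rfl|rfl|rfl
  · exact pairDep 2 3 (by decide) (by rw [hc2, hc3])
  · exact pairDep 4 5 (by decide) (by rw [hc4, hc5])
  · exact pairDep 6 7 (by decide) (by rw [hc6, hc7])
  · exact pairDep 8 9 (by decide) (by rw [hc8, hc9])

set_option maxRecDepth 10000 in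
set_option maxHeartbeats 2000000 in
theorem D1 : ∀ b0 b1 b2 b3 b4 b5 b6 b7 b8 b9 : Bool,
    (depF ![b0, b1, b2, b3, b4, b5, b6, b7, b8, b9] || decide (4 ≤ cnt ![b0, b1, b2, b3, b4, b5, b6, b7, b8, b9]) || goodF ![b0, b1, b2, b3, b4, b5, b6, b7, b8, b9]) = true := by decide

set_option maxRecDepth 10000 in
set_option maxHeartbeats 2000000 in
theorem D2 : ∀ b0 b1 b2 b3 b4 b5 b6 b7 b8 b9 : Bool,
    (!DF ![b0, b1, b2, b3, b4, b5, b6, b7, b8, b9] && (!b0 || DF ![false, b1, b2, b3, b4, b5, b6, b7, b8, b9]) && (!b1 || DF ![b0, false, b2, b3, b4, b5, b6, b7, b8, b9]) && (!b2 || DF ![b0, b1, false, b3, b4, b5, b6, b7, b8, b9]) && (!b3 || DF ![b0, b1, b2, false, b4, b5, b6, b7, b8, b9]) && (!b4 || DF ![b0, b1, b2, b3, false, b5, b6, b7, b8, b9]) && (!b5 || DF ![b0, b1, b2, b3, b4, false, b6, b7, b8, b9]) && (!b6 || DF ![b0, b1, b2, b3, b4, b5, false, b7, b8, b9]) && (!b7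 || DF ![b0, b1, b2, b3, b4, b5, b6, false, b8, b9]) && (!b8 || DF ![b0, b1, b2, b3, b4, b5, b6, b7, false, b9]) && (!b9 || DF ![b0, b1, b2, b3, b4, b5, b6, b7, b8, false])) = ((b0 && b1 && b2 && b3 && !b4 && !b5 && !b6 && !b7 && !b8 && !b9) || (b0 && b1 && !b2 && !b3 && b4 && b5 && b6 && b7 && !b8 && !b9) || (b0 && !b1 && b2 && b3 && b4 && b5 && b6 && b7 && !b8 && !b9) || (!b0 && b1 && b2 && b3 && b4 && b5 && b6 && b7 && !b8 && !b9) || (b0 && b1 && !b2 && !b3 && b4 && b5 && !b6 && !b7 && b8 && b9) || (b0 && !b1 && b2 && b3 && b4 && b5 && !b6 && !b7 && b8 && b9) || (!b0 && b1 && b2 && b3 && b4 && b5 && !b6 && !b7 && b8 && b9) || (!b0 && !b1 && !b2 && !b3 && !b4 && !b5 && b6 && b7 && b8 && b9)) := by decide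

lemma cntEq (s : Finset (Fin 10)) : cnt (fun i => decide (i ∈ s)) = s.card := by
  have h1 : s.card = Multiset.countP (fun i => i ∈ s) Finset.univ.val := by
    conv_lhs => rw [show s = Finset.univ.filter (· ∈ s) from by simp]
    rw [Finset.card, Finset.filter_val, Multiset.countP_eq_card_filter]
  rw [h1, Fin.univ_def]
  exact (Multiset.coe_countP _ _).symm

lemma hv (s : Finset (Fin 10)) : ![decide ((0:Fin 10) ∈ s), decide ((1:Fin 10) ∈ s), decide ((2:Fin 10) ∈ s), decide ((3:Fin 10) ∈ s), decide ((4:Fin 10) ∈ s), decide ((5:Fin 10) ∈ s), decide ((6:Fin 10) ∈ s), decide ((7:Fin 10) ∈ s), decide ((8:Fin 10) ∈ s), decide ((9:Fin 10) ∈ s)] = (fun i => decide (i ∈ s)) := by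
  funext i; fin_cases i <;> rfl
lemma er0 (s : Finset (Fin 10)) : ![false, decide ((1:Fin 10) ∈ s), decide ((2:Fin 10) ∈ s), decide ((3:Fin 10) ∈ s), decide ((4:Fin 10) ∈ s), decide ((5:Fin 10) ∈ s), decide ((6:Fin 10) ∈ s), decide ((7:Fin 10) ∈ s), decide ((8:Fin 10) ∈ s), decide ((9:Fin 10) ∈ s)] = (fun y => decide (y ∈ s.erase 0)) := by
  funext y; fin_cases y <;> simp [Finset.mem_erase, decide_eq_decide] <;> rfl
lemma er1 (s : Finset (Fin 10)) : ![decide ((0:Fin 10) ∈ s), false, decide ((2:Fin 10) ∈ s), decide ((3:Fin 10) ∈ s), decide ((4:Fin 10) ∈ s), decide ((5:Fin 10) ∈ s), decide ((6:Fin 10) ∈ s), decide ((7:Fin 10) ∈ s), decide ((8:Fin 10) ∈ s), decide ((9:Fin 10) ∈ s)] = (fun y => decide (y ∈ s.erase 1)) := by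
  funext y; fin_cases y <;> simp [Finset.mem_erase, decide_eq_decide] <;> rfl
lemma er2 (s : Finset (Fin 10)) : ![decide ((0:Fin 10) ∈ s), decide ((1:Fin 10) ∈ s), false, decide ((3:Fin 10) ∈ s), decide ((4:Fin 10) ∈ s), decide ((5:Fin 10) ∈ s), decide ((6:Fin 10) ∈ s), decide ((7:Fin 10) ∈ s), decide ((8:Fin 10) ∈ s), decide ((9:Fin 10) ∈ s)] = (fun y => decide (y ∈ s.erase 2)) := by
  funext y; fin_cases y <;> simp [Finset.mem_erase, decide_eq_decide] <;> rfl
lemma er3 (s : Finset (Fin 10)) : ![decide ((0:Fin 10) ∈ s), decide ((1:Fin 10) ∈ s), decide ((2:Fin 10) ∈ s), false, decide ((4:Fin 10) ∈ s), decide ((5:Fin 10) ∈ s), decide ((6:Fin 10) ∈ s), decide ((7:Fin 10) ∈ s), decide ((8:Fin 10) ∈ s), decide ((9:Fin 10) ∈ s)] = (fun y => decide (y ∈ s.erase 3)) := by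
  funext y; fin_cases y <;> simp [Finset.mem_erase, decide_eq_decide] <;> rfl
lemma er4 (s : Finset (Fin 10)) : ![decide ((0:Fin 10) ∈ s), decide ((1:Fin 10) ∈ s), decide ((2:Fin 10) ∈ s), decide ((3:Fin 10) ∈ s), false, decide ((5:Fin 10) ∈ s), decide ((6:Fin 10) ∈ s), decide ((7:Fin 10) ∈ s), decide ((8:Fin 10) ∈ s), decide ((9:Fin 10) ∈ s)] = (fun y => decide (y ∈ s.erase 4)) := by
  funext y; fin_cases y <;> simp [Finset.mem_erase, decide_eq_decide] <;> rfl
lemma er5 (s : Finset (Fin 10)) : ![decide ((0:Fin 10) ∈ s), decide ((1:Fin 10) ∈ s), decide ((2:Fin 10) ∈ s), decide ((3:Fin 10) ∈ s), decide ((4:Fin 10) ∈ s), false, decide ((6:Fin 10) ∈ s), decide ((7:Fin 10) ∈ s), decide ((8:Fin 10) ∈ s), decide ((9:Fin 10) ∈ s)] = (fun y => decide (y ∈ s.erase 5)) := by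
  funext y; fin_cases y <;> simp [Finset.mem_erase, decide_eq_decide] <;> rfl
lemma er6 (s : Finset (Fin 10)) : ![decide ((0:Fin 10) ∈ s), decide ((1:Fin 10) ∈ s), decide ((2:Fin 10) ∈ s), decide ((3:Fin 10) ∈ s), decide ((4:Fin 10) ∈ s), decide ((5:Fin 10) ∈ s), false, decide ((7:Fin 10) ∈ s), decide ((8:Fin 10) ∈ s), decide ((9:Fin 10) ∈ s)] = (fun y => decide (y ∈ s.erase 6)) := by
  funext y; fin_cases y <;> simp [Finset.mem_erase, decide_eq_decide] <;> rfl
lemma er7 (s : Finset (Fin 10)) : ![decide ((0:Fin 10) ∈ s), decide ((1:Fin 10) ∈ s), decide ((2:Fin 10) ∈ s), decide ((3:Fin 10) ∈ s), decide ((4:Fin 10) ∈ s), decide ((5:Fin 10) ∈ s), decide ((6:Fin 10) ∈ s), false, decide ((8:Fin 10) ∈ s), decide ((9:Fin 10) ∈ s)] = (fun y => decide (y ∈ s.erase 7)) := by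
  funext y; fin_cases y <;> simp [Finset.mem_erase, decide_eq_decide] <;> rfl
lemma er8 (s : Finset (Fin 10)) : ![decide ((0:Fin 10) ∈ s), decide ((1:Fin 10) ∈ s), decide ((2:Fin 10) ∈ s), decide ((3:Fin 10) ∈ s), decide ((4:Fin 10) ∈ s), decide ((5:Fin 10) ∈ s), decide ((6:Fin 10) ∈ s), decide ((7:Fin 10) ∈ s), false, decide ((9:Fin 10) ∈ s)] = (fun y => decide (y ∈ s.erase 8)) := by
  funext y; fin_cases y <;> simp [Finset.mem_erase, decide_eq_decide] <;> rfl
lemma er9 (s : Finset (Fin 10)) : ![decide ((0:Fin 10) ∈ s), decide ((1:Fin 10) ∈ s), decide ((2:Fin 10) ∈ s), decide ((3:Fin 10) ∈ s), decide ((4:Fin 10) ∈ s), decide ((5:Fin 10) ∈ s), decide ((6:Fin 10) ∈ s), decide ((7:Fin 10) ∈ s), decide ((8:Fin 10) ∈ s), false] = (fun y => decide (y ∈ s.erase 9)) := by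
  funext y; fin_cases y <;> simp [Finset.mem_erase, decide_eq_decide] <;> rfl

lemma subT_iff (s : Finset (Fin 10)) (tr : Fin 10 × Fin 10 × Fin 10) :
    subT (fun i => decide (i ∈ s)) tr = true ↔ s ⊆ {tr.1, tr.2.1, tr.2.2} := by
  simp only [subT, List.all_eq_true, List.mem_finRange, true_implies, Bool.or_eq_true,
    Bool.not_eq_true', decide_eq_false_iff_not, decide_eq_true_eq, beq_iff_eq,
    Finset.subset_iff, Finset.mem_insert, Finset.mem_singleton, or_assoc]
  constructor
  · intro h x hx
    rcases h x with h'|h'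
    · exact absurd hx h'
    · exact h'
  · intro h x
    by_cases hx : x ∈ s
    · exact Or.inr (h hx)
    · exact Or.inl hx

lemma goodF_iff (s : Finset (Fin 10)) :
    goodF (fun i => decide (i ∈ s)) = true ↔ ∃ tr ∈ triples, s ⊆ {tr.1, tr.2.1, tr.2.2} := by
  simp only [goodF, List.any_eq_true, subT_iff]

lemma depF_iff (s : Finset (Fin 10)) : depF (fun i => decide (i ∈ s)) = true ↔
    (∃ p ∈ depsP, p.1 ∈ s ∧ p.2 ∈ s) ∨ (∃ tr ∈ depsT, tr.1 ∈ s ∧ tr.2.1 ∈ s ∧ tr.2.2 ∈ s) := by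
  simp [depF, List.any_eq_true, and_assoc]

lemma DF_iff (t : Finset (Fin 10)) : DF (fun i => decide (i ∈ t)) = true ↔
    ∃ tr ∈ triples, tr.1 ∉ t ∧ tr.2.1 ∉ t ∧ tr.2.2 ∉ t := by
  simp [DF, List.any_eq_true, and_assoc]

lemma pairSub (s : Finset (Fin 10)) (a b : Fin 10) (ha : a ∈ s) (hb : b ∈ s) :
    (↑({a,b} : Finset (Fin 10)) : Set (Fin 10)) ⊆ ↑s :=
  Finset.coe_subset.mpr (by simp [Finset.insert_subset_iff, ha, hb])

lemma tripleSub (s : Finset (Fin 10)) (a b c : Fin 10) (ha : a ∈ s) (hb : b ∈ s) (hc : c ∈ s) :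
    (↑({a,b,c} : Finset (Fin 10)) : Set (Fin 10)) ⊆ ↑s :=
  Finset.coe_subset.mpr (by simp [Finset.insert_subset_iff, ha, hb, hc])

lemma indepChar (Nm : Matroid (Fin 10)) (hN : IsColMatroid Nm Nmat) (s : Finset (Fin 10)) :
    Nm.Indep ↑s ↔ goodF (fun i => decide (i ∈ s)) = true := by
  rw [hN.2]
  constructor
  · intro h
    have hcard := cardLe s h
    have hD1 := D1 (decide ((0:Fin 10) ∈ s)) (decide ((1:Fin 10) ∈ s)) (decide ((2:Fin 10) ∈ s))
      (decide ((3:Fin 10) ∈ s)) (decide ((4:Fin 10) ∈ s)) (decide ((5:Fin 10) ∈ s))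
      (decide ((6:Fin 10) ∈ s)) (decide ((7:Fin 10) ∈ s)) (decide ((8:Fin 10) ∈ s))
      (decide ((9:Fin 10) ∈ s))
    rw [hv s] at hD1
    simp only [Bool.or_eq_true, decide_eq_true_eq] at hD1
    rcases hD1 with (h1|h2)|h3
    · exfalso
      rcases (depF_iff s).mp h1 with ⟨p, hp, ha, hb⟩|⟨tr, htr, ha, hb, hc⟩
      · exact depsP_dep p hp (liMono (pairSub s _ _ ha hb) h)
      · exact depsT_dep tr htr (liMono (tripleSub s _ _ _ ha hb hc) h)
    · rw [cntEq] at h2; omega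
    · exact h3
  · intro h
    rcases (goodF_iff s).mp h with ⟨tr, htr, hsub⟩
    exact liMono (Finset.coe_subset.mpr hsub) (bases_indep tr htr)

lemma basesBase (Nm : Matroid (Fin 10)) (hN : IsColMatroid Nm Nmat) :
    ∀ tr ∈ triples, Nm.IsBase (↑({tr.1, tr.2.1, tr.2.2} : Finset (Fin 10)) : Set (Fin 10)) := by
  intro tr htr
  rw [Matroid.isBase_iff_maximal_indep]
  constructor
  · rw [indepChar Nm hN]
    exact (goodF_iff _).mpr ⟨tr, htr, Finset.Subset.refl _⟩
  · intro T hT hsub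
    have hTfin : T = ↑T.toFinite.toFinset := (Set.Finite.coe_toFinset _).symm
    rw [hTfin] at hT hsub ⊢
    rcases (goodF_iff _).mp ((indepChar Nm hN _).mp hT) with ⟨tr2, htr2, hsub2⟩
    have h1 : ({tr.1, tr.2.1, tr.2.2} : Finset (Fin 10)) ⊆ T.toFinite.toFinset :=
      Finset.coe_subset.mp hsub
    have heq : ({tr.1, tr.2.1, tr.2.2} : Finset (Fin 10)) = {tr2.1, tr2.2.1, tr2.2.2} :=
      Finset.eq_of_subset_of_card_le (h1.trans hsub2)
        (by rw [triples_card tr htr, triples_card tr2 htr2])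
    exact Finset.coe_subset.mpr (by rw [heq]; exact hsub2)

lemma baseChar (Nm : Matroid (Fin 10)) (hN : IsColMatroid Nm Nmat) (B : Set (Fin 10)) :
    Nm.IsBase B ↔ ∃ tr ∈ triples, B = ↑({tr.1, tr.2.1, tr.2.2} : Finset (Fin 10)) := by
  constructor
  · intro hB
    have hI := hB.indep
    have hBfin : B = ↑B.toFinite.toFinset := (Set.Finite.coe_toFinset _).symm
    rw [hBfin] at hI
    rcases (goodF_iff _).mp ((indepChar Nm hN _).mp hI) with ⟨tr, htr, hsub⟩
    refine ⟨tr, htr, ?_⟩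
    exact hB.eq_of_subset_isBase (basesBase Nm hN tr htr)
      (by rw [hBfin]; exact Finset.coe_subset.mpr hsub)
  · rintro ⟨tr, htr, rfl⟩
    exact basesBase Nm hN tr htr

lemma disj3 (t : Finset (Fin 10)) (a b c : Fin 10) :
    Disjoint (↑t : Set (Fin 10)) ↑({a,b,c} : Finset (Fin 10)) ↔ a ∉ t ∧ b ∉ t ∧ c ∉ t := by
  simp [Set.disjoint_right]

lemma dualIndepChar (Nm : Matroid (Fin 10)) (hN : IsColMatroid Nm Nmat) (t : Finset (Fin 10)) :
    Nm✶.Indep ↑t ↔ DF (fun i => decide (i ∈ t)) = true := by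
  rw [Matroid.dual_indep_iff_exists', DF_iff]
  constructor
  · rintro ⟨-, B, hB, hdisj⟩
    rcases (baseChar Nm hN B).mp hB with ⟨tr, htr, rfl⟩
    exact ⟨tr, htr, (disj3 t _ _ _).mp hdisj⟩
  · rintro ⟨tr, htr, hd⟩
    exact ⟨by rw [hN.1]; exact Set.subset_univ _, _,
      (baseChar Nm hN _).mpr ⟨tr, htr, rfl⟩, (disj3 t _ _ _).mpr hd⟩

lemma impHelper (p : Prop) [Decidable p] (b : Bool) :
    ((!(decide p) || b) = true) ↔ (p → b = true) := by
  by_cases h : p <;> simp [h]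

lemma pat1 (s : Finset (Fin 10)) : ((0:Fin 10) ∈ s ∧ (1:Fin 10) ∈ s ∧ (2:Fin 10) ∈ s ∧ (3:Fin 10) ∈ s ∧ (4:Fin 10) ∉ s ∧ (5:Fin 10) ∉ s ∧ (6:Fin 10) ∉ s ∧ (7:Fin 10) ∉ s ∧ (8:Fin 10) ∉ s ∧ (9:Fin 10) ∉ s) ↔ s = ({0,1,2,3} : Finset (Fin 10)) := by
  constructor
  · rintro ⟨h0,h1,h2,h3,h4,h5,h6,h7,h8,h9⟩
    apply Finset.ext; intro x; fin_cases x <;> simp_all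
  · rintro rfl
    refine ⟨?_,?_,?_,?_,?_,?_,?_,?_,?_,?_⟩ <;> decide
lemma pat2 (s : Finset (Fin 10)) : ((0:Fin 10) ∈ s ∧ (1:Fin 10) ∈ s ∧ (2:Fin 10) ∉ s ∧ (3:Fin 10) ∉ s ∧ (4:Fin 10) ∈ s ∧ (5:Fin 10) ∈ s ∧ (6:Fin 10) ∈ s ∧ (7:Fin 10) ∈ s ∧ (8:Fin 10) ∉ s ∧ (9:Fin 10) ∉ s) ↔ s = ({0,1,4,5,6,7} : Finset (Fin 10)) := by
  constructor
  · rintro ⟨h0,h1,h2,h3,h4,h5,h6,h7,h8,h9⟩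
    apply Finset.ext; intro x; fin_cases x <;> simp_all
  · rintro rfl
    refine ⟨?_,?_,?_,?_,?_,?_,?_,?_,?_,?_⟩ <;> decide
lemma pat3 (s : Finset (Fin 10)) : ((0:Fin 10) ∈ s ∧ (1:Fin 10) ∉ s ∧ (2:Fin 10) ∈ s ∧ (3:Fin 10) ∈ s ∧ (4:Fin 10) ∈ s ∧ (5:Fin 10) ∈ s ∧ (6:Fin 10) ∈ s ∧ (7:Fin 10) ∈ s ∧ (8:Fin 10) ∉ s ∧ (9:Fin 10) ∉ s) ↔ s = ({0,2,3,4,5,6,7} : Finset (Fin 10)) := by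
  constructor
  · rintro ⟨h0,h1,h2,h3,h4,h5,h6,h7,h8,h9⟩
    apply Finset.ext; intro x; fin_cases x <;> simp_all
  · rintro rfl
    refine ⟨?_,?_,?_,?_,?_,?_,?_,?_,?_,?_⟩ <;> decide
lemma pat4 (s : Finset (Fin 10)) : ((0:Fin 10) ∉ s ∧ (1:Fin 10) ∈ s ∧ (2:Fin 10) ∈ s ∧ (3:Fin 10) ∈ s ∧ (4:Fin 10) ∈ s ∧ (5:Fin 10) ∈ s ∧ (6:Fin 10) ∈ s ∧ (7:Fin 10) ∈ s ∧ (8:Fin 10) ∉ s ∧ (9:Fin 10) ∉ s) ↔ s = ({1,2,3,4,5,6,7} : Finset (Fin 10)) := by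
  constructor
  · rintro ⟨h0,h1,h2,h3,h4,h5,h6,h7,h8,h9⟩
    apply Finset.ext; intro x; fin_cases x <;> simp_all
  · rintro rfl
    refine ⟨?_,?_,?_,?_,?_,?_,?_,?_,?_,?_⟩ <;> decide
lemma pat5 (s : Finset (Fin 10)) : ((0:Fin 10) ∈ s ∧ (1:Fin 10) ∈ s ∧ (2:Fin 10) ∉ s ∧ (3:Fin 10) ∉ s ∧ (4:Fin 10) ∈ s ∧ (5:Fin 10) ∈ s ∧ (6:Fin 10) ∉ s ∧ (7:Fin 10) ∉ s ∧ (8:Fin 10) ∈ s ∧ (9:Fin 10) ∈ s) ↔ s = ({0,1,4,5,8,9} : Finset (Fin 10)) := by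
  constructor
  · rintro ⟨h0,h1,h2,h3,h4,h5,h6,h7,h8,h9⟩
    apply Finset.ext; intro x; fin_cases x <;> simp_all
  · rintro rfl
    refine ⟨?_,?_,?_,?_,?_,?_,?_,?_,?_,?_⟩ <;> decide
lemma pat6 (s : Finset (Fin 10)) : ((0:Fin 10) ∈ s ∧ (1:Fin 10) ∉ s ∧ (2:Fin 10) ∈ s ∧ (3:Fin 10) ∈ s ∧ (4:Fin 10) ∈ s ∧ (5:Fin 10) ∈ s ∧ (6:Fin 10) ∉ s ∧ (7:Fin 10) ∉ s ∧ (8:Fin 10) ∈ s ∧ (9:Fin 10) ∈ s) ↔ s = ({0,2,3,4,5,8,9} : Finset (Fin 10)) := by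
  constructor
  · rintro ⟨h0,h1,h2,h3,h4,h5,h6,h7,h8,h9⟩
    apply Finset.ext; intro x; fin_cases x <;> simp_all
  · rintro rfl
    refine ⟨?_,?_,?_,?_,?_,?_,?_,?_,?_,?_⟩ <;> decide
lemma pat7 (s : Finset (Fin 10)) : ((0:Fin 10) ∉ s ∧ (1:Fin 10) ∈ s ∧ (2:Fin 10) ∈ s ∧ (3:Fin 10) ∈ s ∧ (4:Fin 10) ∈ s ∧ (5:Fin 10) ∈ s ∧ (6:Fin 10) ∉ s ∧ (7:Fin 10) ∉ s ∧ (8:Fin 10) ∈ s ∧ (9:Fin 10) ∈ s) ↔ s = ({1,2,3,4,5,8,9} : Finset (Fin 10)) := by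
  constructor
  · rintro ⟨h0,h1,h2,h3,h4,h5,h6,h7,h8,h9⟩
    apply Finset.ext; intro x; fin_cases x <;> simp_all
  · rintro rfl
    refine ⟨?_,?_,?_,?_,?_,?_,?_,?_,?_,?_⟩ <;> decide
lemma pat8 (s : Finset (Fin 10)) : ((0:Fin 10) ∉ s ∧ (1:Fin 10) ∉ s ∧ (2:Fin 10) ∉ s ∧ (3:Fin 10) ∉ s ∧ (4:Fin 10) ∉ s ∧ (5:Fin 10) ∉ s ∧ (6:Fin 10) ∈ s ∧ (7:Fin 10) ∈ s ∧ (8:Fin 10) ∈ s ∧ (9:Fin 10) ∈ s) ↔ s = ({6,7,8,9} : Finset (Fin 10)) := by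
  constructor
  · rintro ⟨h0,h1,h2,h3,h4,h5,h6,h7,h8,h9⟩
    apply Finset.ext; intro x; fin_cases x <;> simp_all
  · rintro rfl
    refine ⟨?_,?_,?_,?_,?_,?_,?_,?_,?_,?_⟩ <;> decide

lemma scoe1 (s : Finset (Fin 10)) :
    ((↑s : Set (Fin 10)) = ({0, 1, 2, 3} : Set (Fin 10))) ↔ s = ({0, 1, 2, 3} : Finset (Fin 10)) := by
  rw [show ({0, 1, 2, 3} : Set (Fin 10)) = ↑(({0, 1, 2, 3} : Finset (Fin 10))) from by simp]
  exact Finset.coe_inj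
lemma scoe2 (s : Finset (Fin 10)) :
    ((↑s : Set (Fin 10)) = ({0, 1, 4, 5, 6, 7} : Set (Fin 10))) ↔ s = ({0, 1, 4, 5, 6, 7} : Finset (Fin 10)) := by
  rw [show ({0, 1, 4, 5, 6, 7} : Set (Fin 10)) = ↑(({0, 1, 4, 5, 6, 7} : Finset (Fin 10))) from by simp]
  exact Finset.coe_inj
lemma scoe3 (s : Finset (Fin 10)) :
    ((↑s : Set (Fin 10)) = ({0, 2, 3, 4, 5, 6, 7} : Set (Fin 10))) ↔ s = ({0, 2, 3, 4, 5, 6, 7} : Finset (Fin 10)) := by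
  rw [show ({0, 2, 3, 4, 5, 6, 7} : Set (Fin 10)) = ↑(({0, 2, 3, 4, 5, 6, 7} : Finset (Fin 10))) from by simp]
  exact Finset.coe_inj
lemma scoe4 (s : Finset (Fin 10)) :
    ((↑s : Set (Fin 10)) = ({1, 2, 3, 4, 5, 6, 7} : Set (Fin 10))) ↔ s = ({1, 2, 3, 4, 5, 6, 7} : Finset (Fin 10)) := by
  rw [show ({1, 2, 3, 4, 5, 6, 7} : Set (Fin 10)) = ↑(({1, 2, 3, 4, 5, 6, 7} : Finset (Fin 10))) from by simp]
  exact Finset.coe_inj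
lemma scoe5 (s : Finset (Fin 10)) :
    ((↑s : Set (Fin 10)) = ({0, 1, 4, 5, 8, 9} : Set (Fin 10))) ↔ s = ({0, 1, 4, 5, 8, 9} : Finset (Fin 10)) := by
  rw [show ({0, 1, 4, 5, 8, 9} : Set (Fin 10)) = ↑(({0, 1, 4, 5, 8, 9} : Finset (Fin 10))) from by simp]
  exact Finset.coe_inj
lemma scoe6 (s : Finset (Fin 10)) :
    ((↑s : Set (Fin 10)) = ({0, 2, 3, 4, 5, 8, 9} : Set (Fin 10))) ↔ s = ({0, 2, 3, 4, 5, 8, 9} : Finset (Fin 10)) := by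
  rw [show ({0, 2, 3, 4, 5, 8, 9} : Set (Fin 10)) = ↑(({0, 2, 3, 4, 5, 8, 9} : Finset (Fin 10))) from by simp]
  exact Finset.coe_inj
lemma scoe7 (s : Finset (Fin 10)) :
    ((↑s : Set (Fin 10)) = ({1, 2, 3, 4, 5, 8, 9} : Set (Fin 10))) ↔ s = ({1, 2, 3, 4, 5, 8, 9} : Finset (Fin 10)) := by
  rw [show ({1, 2, 3, 4, 5, 8, 9} : Set (Fin 10)) = ↑(({1, 2, 3, 4, 5, 8, 9} : Finset (Fin 10))) from by simp]
  exact Finset.coe_inj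
lemma scoe8 (s : Finset (Fin 10)) :
    ((↑s : Set (Fin 10)) = ({6, 7, 8, 9} : Set (Fin 10))) ↔ s = ({6, 7, 8, 9} : Finset (Fin 10)) := by
  rw [show ({6, 7, 8, 9} : Set (Fin 10)) = ↑(({6, 7, 8, 9} : Finset (Fin 10))) from by simp]
  exact Finset.coe_inj

/-- The circuits of the dual of the column matroid of `N` are exactly the eight
listed sets (columns indexed `0,…,9` for `e1,…,e10`). -/
theorem stmt8 (Nm : Matroid (Fin 10)) (hN : IsColMatroid Nm Nmat) :
    ∀ C : Set (Fin 10), Circuit Nm✶ C ↔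
      C ∈ ({ {0, 1, 2, 3}, {0, 1, 4, 5, 6, 7}, {0, 2, 3, 4, 5, 6, 7},
             {1, 2, 3, 4, 5, 6, 7}, {0, 1, 4, 5, 8, 9}, {0, 2, 3, 4, 5, 8, 9},
             {1, 2, 3, 4, 5, 8, 9}, {6, 7, 8, 9} } : Set (Set (Fin 10))) := by
  intro C
  have hCfin : C = ↑C.toFinite.toFinset := (Set.Finite.coe_toFinset _).symm
  set s := C.toFinite.toFinset with hsdef
  have hE : C ⊆ Nm✶.E := by rw [Matroid.dual_ground, hN.1]; exact Set.subset_univ _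
  have hcirc : Circuit Nm✶ C ↔ (¬ Nm✶.Indep C ∧ ∀ D ⊂ C, Nm✶.Indep D) := by
    unfold Circuit; rw [and_iff_right hE]
  have hsub : (∀ D ⊂ C, Nm✶.Indep D) ↔ ∀ x ∈ s, Nm✶.Indep ↑(s.erase x) := by
    constructor
    · intro h x hx
      apply h
      rw [hCfin]
      exact Finset.coe_ssubset.mpr (Finset.erase_ssubset hx)
    · intro h D hD
      have hDfin : D = ↑D.toFinite.toFinset := (Set.Finite.coe_toFinset _).symm
      have hss : D.toFinite.toFinset ⊂ s := by
        rw [← Finset.coe_ssubset, ← hDfin, ← hCfin]; exact hD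
      obtain ⟨x, hxs, hxd⟩ := Finset.exists_of_ssubset hss
      have hsubd : D.toFinite.toFinset ⊆ s.erase x :=
        Finset.subset_erase.mpr ⟨subset_of_ssubset hss, hxd⟩
      rw [hDfin]
      exact (h x hxs).subset (Finset.coe_subset.mpr hsubd)
  have hmain := D2 (decide ((0:Fin 10) ∈ s)) (decide ((1:Fin 10) ∈ s)) (decide ((2:Fin 10) ∈ s)) (decide ((3:Fin 10) ∈ s)) (decide ((4:Fin 10) ∈ s)) (decide ((5:Fin 10) ∈ s)) (decide ((6:Fin 10) ∈ s)) (decide ((7:Fin 10) ∈ s)) (decide ((8:Fin 10) ∈ s)) (decide ((9:Fin 10) ∈ s))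
  rw [hv s, er0 s, er1 s, er2 s, er3 s, er4 s, er5 s, er6 s, er7 s, er8 s, er9 s] at hmain
  rw [hcirc, hsub, hCfin]
  rw [show ¬ Nm✶.Indep ↑s ↔ DF (fun i => decide (i ∈ s)) = false from by
    rw [dualIndepChar Nm hN s, Bool.not_eq_true]]
  have hforall : (∀ x ∈ s, Nm✶.Indep ↑(s.erase x)) ↔
      (∀ x ∈ s, DF (fun y => decide (y ∈ s.erase x)) = true) := by
    constructor
    · intro h x hx; exact (dualIndepChar Nm hN (s.erase x)).mp (h x hx)
    · intro h x hx; exact (dualIndepChar Nm hN (s.erase x)).mpr (h x hx)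
  rw [hforall]
  have hL : (DF (fun i => decide (i ∈ s)) = false ∧
      ∀ x ∈ s, DF (fun y => decide (y ∈ s.erase x)) = true) ↔
      (((decide ((0:Fin 10) ∈ s) && decide ((1:Fin 10) ∈ s) && decide ((2:Fin 10) ∈ s) && decide ((3:Fin 10) ∈ s) && !decide ((4:Fin 10) ∈ s) && !decide ((5:Fin 10) ∈ s) && !decide ((6:Fin 10) ∈ s) && !decide ((7:Fin 10) ∈ s) && !decide ((8:Fin 10) ∈ s) && !decide ((9:Fin 10) ∈ s)) || (decide ((0:Fin 10) ∈ s) && decide ((1:Fin 10) ∈ s) && !decide ((2:Fin 10) ∈ s) && !decide ((3:Fin 10) ∈ s) && decide ((4:Fin 10) ∈ s) && decide ((5:Fin 10) ∈ s) && decide ((6:Fin 10) ∈ s) && decide ((7:Fin 10) ∈ s) && !decide ((8:Fin 10) ∈ s) && !decide ((9:Fin 10) ∈ s)) || (decide ((0:Fin 10) ∈ s) && !decide ((1:Fin 10) ∈ s) && decide ((2:Fin 10) ∈ s) && decide ((3:Fin 10) ∈ s) && decide ((4:Fin 10) ∈ s) && decide ((5:Fin 10) ∈ s) && decide ((6:Fin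 10) ∈ s) && decide ((7:Fin 10) ∈ s) && !decide ((8:Fin 10) ∈ s) && !decide ((9:Fin 10) ∈ s)) || (!decide ((0:Fin 10) ∈ s) && decide ((1:Fin 10) ∈ s) && decide ((2:Fin 10) ∈ s) && decide ((3:Fin 10) ∈ s) && decide ((4:Fin 10) ∈ s) && decide ((5:Fin 10) ∈ s) && decide ((6:Fin 10) ∈ s) && decide ((7:Fin 10) ∈ s) && !decide ((8:Fin 10) ∈ s) && !decide ((9:Fin 10) ∈ s)) || (decide ((0:Fin 10) ∈ s) && decide ((1:Fin 10) ∈ s) && !decide ((2:Fin 10) ∈ s) && !decide ((3:Fin 10) ∈ s) && decide ((4:Fin 10) ∈ s) && decide ((5:Fin 10) ∈ s) && !decide ((6:Fin 10) ∈ s) && !decide ((7:Fin 10) ∈ s) && decide ((8:Fin 10) ∈ s) && decide ((9:Fin 10) ∈ s)) || (decide ((0:Fin 10) ∈ s) && !decide ((1:Fin 10) ∈ s) && decide ((2:Fin 10) ∈ s) && decide ((3:Fin 10) ∈ s) && decide ((4:Fin 10) ∈ s) && decide ((5:Fin 10) ∈ s) && !decide ((6:Fin 10) ∈ s) && !decide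 ((7:Fin 10) ∈ s) && decide ((8:Fin 10) ∈ s) && decide ((9:Fin 10) ∈ s)) || (!decide ((0:Fin 10) ∈ s) && decide ((1:Fin 10) ∈ s) && decide ((2:Fin 10) ∈ s) && decide ((3:Fin 10) ∈ s) && decide ((4:Fin 10) ∈ s) && decide ((5:Fin 10) ∈ s) && !decide ((6:Fin 10) ∈ s) && !decide ((7:Fin 10) ∈ s) && decide ((8:Fin 10) ∈ s) && decide ((9:Fin 10) ∈ s)) || (!decide ((0:Fin 10) ∈ s) && !decide ((1:Fin 10) ∈ s) && !decide ((2:Fin 10) ∈ s) && !decide ((3:Fin 10) ∈ s) && !decide ((4:Fin 10) ∈ s) && !decide ((5:Fin 10) ∈ s) && decide ((6:Fin 10) ∈ s) && decide ((7:Fin 10) ∈ s) && decide ((8:Fin 10) ∈ s) && decide ((9:Fin 10) ∈ s))) = true) := by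
    rw [← hmain]
    simp only [Bool.and_eq_true, Bool.not_eq_true', impHelper, and_assoc]
    constructor
    · rintro ⟨hA, hB⟩
      exact ⟨hA, fun h => hB 0 h, fun h => hB 1 h, fun h => hB 2 h, fun h => hB 3 h, fun h => hB 4 h, fun h => hB 5 h, fun h => hB 6 h, fun h => hB 7 h, fun h => hB 8 h, fun h => hB 9 h⟩
    · rintro ⟨hA, hB⟩
      refine ⟨hA, ?_⟩
      intro x hx
      fin_cases x
      exacts [hB.1 hx, hB.2.1 hx, hB.2.2.1 hx, hB.2.2.2.1 hx, hB.2.2.2.2.1 hx, hB.2.2.2.2.2.1 hx, hB.2.2.2.2.2.2.1 hx, hB.2.2.2.2.2.2.2.1 hx, hB.2.2.2.2.2.2.2.2.1 hx, hB.2.2.2.2.2.2.2.2.2 hx]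
  rw [hL]
  simp only [Bool.or_eq_true, Bool.and_eq_true, Bool.not_eq_true',
    decide_eq_true_eq, decide_eq_false_iff_not, or_assoc, and_assoc,
    pat1, pat2, pat3, pat4, pat5, pat6, pat7, pat8]
  simp only [Set.mem_insert_iff, Set.mem_singleton_iff]
  rw [scoe1 s, scoe2 s, scoe3 s, scoe4 s, scoe5 s, scoe6 s, scoe7 s, scoe8 s]

end IPF
end

section
/- In the dual M of the vector matroid of the matrix N (as in the previous context), the closure of every circuit of M has cardinality at most 8; in particular, M has no spanning circuit. -/
open Matroid Set

namespace IPF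

variable {α : Type*}

lemma li3 {ι : Type*} [DecidableEq ι] (v : ι → (Fin 3 → ℚ)) (a b c : ι)
    (hab : a ≠ b) (hac : a ≠ c) (hbc : b ≠ c) :
    LinearIndependent ℚ (fun j : ({a, b, c} : Set ι) => v j) ↔
      (Matrix.of ![v a, v b, v c]).det ≠ 0 := by
  have h1 : LinearIndependent ℚ (fun i => (Matrix.of ![v a, v b, v c]) i) ↔
      (Matrix.of ![v a, v b, v c]).det ≠ 0 := by
    exact Matrix.linearIndependent_rows_iff_isUnit.trans (by rw [Matrix.isUnit_iff_isUnit_det,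
      isUnit_iff_ne_zero])
  refine Iff.trans (Iff.symm (linearIndependent_equiv'
    (⟨![⟨a, by simp⟩, ⟨b, by simp⟩, ⟨c, by simp⟩],
      fun x => if (x : ι) = a then 0 else if (x : ι) = b then 1 else 2, ?_, ?_⟩ :
        Fin 3 ≃ ({a, b, c} : Set ι))
    (f := fun j : ({a, b, c} : Set ι) => v j)
    (g := fun i => (Matrix.of ![v a, v b, v c]) i) ?_)) h1
  · intro i
    fin_cases i <;> simp [hab.symm, hac.symm, hbc.symm, hab, hac, hbc]
  · rintro ⟨x, hx⟩
    simp only [mem_insert_iff, mem_singleton_iff] at hx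
    rcases hx with rfl | rfl | rfl <;>
      simp [hab.symm, hac.symm, hbc.symm, hab, hac, hbc]
  · funext i; fin_cases i <;> rfl

/-- In the dual of the column matroid of `N`, the closure of every circuit has at
most 8 elements; in particular there is no spanning circuit. -/
theorem stmt9 (Nm : Matroid (Fin 10)) (hN : IsColMatroid Nm Nmat) :
    (∀ C, Circuit Nm✶ C → (Nm✶.closure C).ncard ≤ 8) ∧
      ∀ C, Circuit Nm✶ C → Nm✶.closure C ≠ Nm✶.E := by
  obtain ⟨hE, hIff⟩ := hN
  -- the columns of `Nmat`
  have hv0 : Nmat.transpose 0 = ![2,1,0] := by funext i; fin_cases i <;> rfl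
  have hv1 : Nmat.transpose 1 = ![1,1,0] := by funext i; fin_cases i <;> rfl
  have hv2 : Nmat.transpose 2 = ![3,1,0] := by funext i; fin_cases i <;> rfl
  have hv3 : Nmat.transpose 3 = ![3,1,0] := by funext i; fin_cases i <;> rfl
  have hv4 : Nmat.transpose 4 = ![-1,1,0] := by funext i; fin_cases i <;> rfl
  have hv5 : Nmat.transpose 5 = ![-1,1,0] := by funext i; fin_cases i <;> rfl
  have hv6 : Nmat.transpose 6 = ![0,1,-1] := by funext i; fin_cases i <;> rfl
  have hv7 : Nmat.transpose 7 = ![0,1,-1] := by funext i; fin_cases i <;> rfl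
  have hv8 : Nmat.transpose 8 = ![-1,0,1] := by funext i; fin_cases i <;> rfl
  have hv9 : Nmat.transpose 9 = ![-1,0,1] := by funext i; fin_cases i <;> rfl
  -- independent triples
  have hI601 : Nm.Indep {6,0,1} := by
    rw [hIff]; refine (li3 (fun i => Nmat.transpose i) 6 0 1 (by decide) (by decide) (by decide)).mpr ?_
    simp only [hv6, hv0, hv1]; simp [Matrix.det_fin_three] <;> norm_num
  have hI701 : Nm.Indep {7,0,1} := by
    rw [hIff]; refine (li3 (fun i => Nmat.transpose i) 7 0 1 (by decide) (by decide) (by decide)).mpr ?_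
    simp only [hv7, hv0, hv1]; simp [Matrix.det_fin_three] <;> norm_num
  have hI801 : Nm.Indep {8,0,1} := by
    rw [hIff]; refine (li3 (fun i => Nmat.transpose i) 8 0 1 (by decide) (by decide) (by decide)).mpr ?_
    simp only [hv8, hv0, hv1]; simp [Matrix.det_fin_three] <;> norm_num
  have hI901 : Nm.Indep {9,0,1} := by
    rw [hIff]; refine (li3 (fun i => Nmat.transpose i) 9 0 1 (by decide) (by decide) (by decide)).mpr ?_
    simp only [hv9, hv0, hv1]; simp [Matrix.det_fin_three] <;> norm_num
  have hI206 : Nm.Indep {2,0,6} := by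
    rw [hIff]; refine (li3 (fun i => Nmat.transpose i) 2 0 6 (by decide) (by decide) (by decide)).mpr ?_
    simp only [hv2, hv0, hv6]; simp [Matrix.det_fin_three] <;> norm_num
  have hI306 : Nm.Indep {3,0,6} := by
    rw [hIff]; refine (li3 (fun i => Nmat.transpose i) 3 0 6 (by decide) (by decide) (by decide)).mpr ?_
    simp only [hv3, hv0, hv6]; simp [Matrix.det_fin_three] <;> norm_num
  have hI406 : Nm.Indep {4,0,6} := by
    rw [hIff]; refine (li3 (fun i => Nmat.transpose i) 4 0 6 (by decide) (by decide) (by decide)).mpr ?_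
    simp only [hv4, hv0, hv6]; simp [Matrix.det_fin_three] <;> norm_num
  have hI506 : Nm.Indep {5,0,6} := by
    rw [hIff]; refine (li3 (fun i => Nmat.transpose i) 5 0 6 (by decide) (by decide) (by decide)).mpr ?_
    simp only [hv5, hv0, hv6]; simp [Matrix.det_fin_three] <;> norm_num
  -- dependent triples
  have hD201 : ¬ Nm.Indep {2,0,1} := by
    rw [hIff]; refine mt (li3 (fun i => Nmat.transpose i) 2 0 1 (by decide) (by decide) (by decide)).mp ?_; rw [not_ne_iff]
    simp only [hv2, hv0, hv1]; simp [Matrix.det_fin_three] <;> norm_num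
  -- dependent (parallel) pairs
  have hpair : ∀ a b : Fin 10, a ≠ b → Nmat.transpose a = Nmat.transpose b →
      ¬ Nm.Indep {a,b} := by
    intro a b hab heq h
    rw [hIff] at h
    have := h.injective (a₁ := ⟨a, by simp⟩) (a₂ := ⟨b, by simp⟩) heq
    exact hab (by simpa using this)
  have hD23 : ¬ Nm.Indep {2,3} := hpair 2 3 (by decide) (by rw [hv2, hv3])
  have hD45 : ¬ Nm.Indep {4,5} := hpair 4 5 (by decide) (by rw [hv4, hv5])
  have hD67 : ¬ Nm.Indep {6,7} := hpair 6 7 (by decide) (by rw [hv6, hv7])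
  have hD89 : ¬ Nm.Indep {8,9} := hpair 8 9 (by decide) (by rw [hv8, hv9])
  -- independent singletons
  have hI2 : Nm.Indep {2} := hI206.subset (by simp)
  have hI3 : Nm.Indep {3} := hI306.subset (by simp)
  have hI4 : Nm.Indep {4} := hI406.subset (by simp)
  have hI5 : Nm.Indep {5} := hI506.subset (by simp)
  have hI6 : Nm.Indep {6} := hI601.subset (by simp)
  have hI7 : Nm.Indep {7} := hI701.subset (by simp)
  have hI8 : Nm.Indep {8} := hI801.subset (by simp)
  have hI9 : Nm.Indep {9} := hI901.subset (by simp)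
  have hI01 : Nm.Indep {0,1} := hI601.subset (by simp)
  -- 6 is not in the closure of {0,1} in Nm
  have h6cl : (6 : Fin 10) ∉ Nm.closure {0,1} := by
    intro h
    rw [hI01.mem_closure_iff_of_notMem (by simp)] at h
    exact h.1 hI601
  -- {0,1,2} is not spanning in Nm
  have key1 : ¬ Nm.Spanning {0,1,2} := by
    intro hsp
    have hsubcl : ({0,1,2} : Set (Fin 10)) ⊆ Nm.closure {0,1} := by
      intro x hx
      simp only [mem_insert_iff, mem_singleton_iff] at hx
      rcases hx with rfl | rfl | rfl
      · exact Nm.subset_closure {0,1} (by rw [hE]; exact subset_univ _) (by simp)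
      · exact Nm.subset_closure {0,1} (by rw [hE]; exact subset_univ _) (by simp)
      · rw [hI01.mem_closure_iff_of_notMem (by simp)]
        exact ⟨hD201, by rw [hE]; exact subset_univ _⟩
    have h1 : Nm.closure {0,1,2} ⊆ Nm.closure {0,1} :=
      closure_subset_closure_of_subset_closure hsubcl
    have h6 : (6 : Fin 10) ∈ Nm.closure {0,1,2} := by
      rw [hsp.closure_eq, hE]; exact mem_univ _
    exact h6cl (h1 h6)
  have hME : Nm✶.E = univ := by rw [dual_ground, hE]
  -- complements of parallel pairs are flats of the dual
  have flat : ∀ a b : Fin 10, a ≠ b → ¬ Nm.Indep {a,b} → Nm.Indep {a} → Nm.Indep {b} →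
      Nm✶.closure (univ \ {a,b}) = univ \ {a,b} := by
    intro a b hab hdep ha hb
    have hcoind : ∀ X : Set (Fin 10), Nm✶.closure X = univ → Nm.Indep (univ \ X) := by
      intro X hcl
      have hXE : X ⊆ Nm✶.E := by rw [hME]; exact subset_univ _
      have hsp : Nm✶.Spanning X := ⟨by rw [hcl, hME], hXE⟩
      have hco : Nm✶.Coindep (Nm✶.E \ X) := (spanning_iff_compl_coindep hXE).mp hsp
      have h2 : Nm✶✶.Indep (Nm✶.E \ X) := hco.indep
      rwa [dual_dual, hME] at h2
    have hne : Nm✶.closure (univ \ {a,b}) ≠ univ := by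
      intro h
      have h2 := hcoind _ h
      rw [Set.diff_diff_cancel_left (subset_univ _)] at h2
      exact hdep h2
    have hins1 : insert a (univ \ {a,b}) = univ \ {b} := by
      ext x
      simp only [mem_insert_iff, mem_diff, mem_univ, true_and, mem_singleton_iff, not_or]
      constructor
      · rintro (rfl | ⟨h1, h2⟩)
        · exact hab
        · exact h2
      · intro hxb
        by_cases hxa : x = a
        · exact Or.inl hxa
        · exact Or.inr ⟨hxa, hxb⟩
    have hins2 : insert b (univ \ {a,b}) = univ \ {a} := by
      ext x
      simp only [mem_insert_iff, mem_diff, mem_univ, true_and, mem_singleton_iff, not_or]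
      constructor
      · rintro (rfl | ⟨h1, h2⟩)
        · exact hab.symm
        · exact h1
      · intro hxa
        by_cases hxb : x = b
        · exact Or.inl hxb
        · exact Or.inr ⟨hxa, hxb⟩
    have hstep : ∀ c d : Fin 10, insert c (univ \ {a,b}) = univ \ {d} → Nm.Indep {d} →
        c ∉ Nm✶.closure (univ \ {a,b}) := by
      intro c d hins hd hmem
      have h2 : Nm✶.closure (univ \ {d}) = Nm✶.closure (univ \ {a,b}) := by
        rw [← hins]
        exact closure_insert_eq_of_mem_closure hmem
      have hco : Nm✶.Coindep {d} := by rw [coindep_def, dual_dual]; exact hd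
      have hsp := hco.compl_spanning
      rw [hME] at hsp
      have h3 : Nm✶.closure (univ \ {d}) = univ := by rw [hsp.closure_eq, hME]
      rw [h2] at h3
      exact hne h3
    apply subset_antisymm
    · intro x hx
      refine ⟨mem_univ _, ?_⟩
      intro hxab
      simp only [mem_insert_iff, mem_singleton_iff] at hxab
      rcases hxab with rfl | rfl
      · exact hstep x b hins1 hb hx
      · exact hstep x a hins2 ha hx
    · exact Nm✶.subset_closure _ (by rw [hME]; exact subset_univ _)
  -- a circuit of the dual containing one element of a parallel pair contains the other
  have pmem : ∀ a b : Fin 10, a ≠ b → ¬ Nm.Indep {a,b} → Nm.Indep {a} → Nm.Indep {b} →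
      ∀ C, Circuit Nm✶ C → a ∈ C → b ∈ C := by
    intro a b hab hdep ha hb C hC haC
    by_contra hbC
    obtain ⟨hCE, hCd, hCmin⟩ := hC
    have hD := hCmin _ (sdiff_singleton_ssubset.mpr haC)
    have haD : a ∉ C \ {a} := by simp
    have hacl : a ∈ Nm✶.closure (C \ {a}) := by
      rw [hD.mem_closure_iff_of_notMem haD, insert_diff_singleton, insert_eq_of_mem haC]
      exact ⟨hCd, hCE⟩
    have hsub : C \ {a} ⊆ univ \ {a, b} := by
      rintro x ⟨hxC, hxa⟩
      refine ⟨mem_univ _, ?_⟩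
      intro hxab
      simp only [mem_insert_iff, mem_singleton_iff] at hxab
      rcases hxab with rfl | rfl
      · exact hxa rfl
      · exact hbC hxC
    have h2 := (Nm✶.closure_subset_closure hsub) hacl
    rw [flat a b hab hdep ha hb] at h2
    exact h2.2 (mem_insert _ _)
  -- the main claim
  have main : ∀ C, Circuit Nm✶ C → ∃ a b : Fin 10, a ≠ b ∧ Nm✶.closure C ⊆ univ \ {a, b} := by
    intro C hC
    have hnot : ¬ ({2,3,4,5,6,7,8,9} : Set (Fin 10)) ⊆ C := by
      intro hsub
      obtain ⟨hCE, hCd, hCmin⟩ := hC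
      have h2C : (2 : Fin 10) ∈ C := hsub (mem_insert _ _)
      have hD := hCmin _ (sdiff_singleton_ssubset.mpr h2C)
      have hco : Nm.Coindep (C \ {2}) := by rw [coindep_def]; exact hD
      have hsp := hco.compl_spanning
      rw [hE] at hsp
      have hsp2 : Nm.Spanning {0,1,2} := by
        refine hsp.superset ?_ (by rw [hE]; exact subset_univ _)
        rintro x ⟨-, hx⟩
        by_contra hx012
        have hx29 : x ∈ ({2,3,4,5,6,7,8,9} : Set (Fin 10)) := by
          simp only [mem_insert_iff, mem_singleton_iff] at hx012 ⊢
          exact (by decide : ∀ y : Fin 10, ¬(y = 0 ∨ y = 1 ∨ y = 2) →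
            (y = 2 ∨ y = 3 ∨ y = 4 ∨ y = 5 ∨ y = 6 ∨ y = 7 ∨ y = 8 ∨ y = 9)) x hx012
        have hx2 : x ∉ ({2} : Set (Fin 10)) := by
          intro h2
          exact hx012 (by rw [mem_singleton_iff] at h2; rw [h2]; simp)
        exact hx ⟨hsub hx29, hx2⟩
      exact key1 hsp2
    obtain ⟨x, hx29, hxC⟩ := not_subset.mp hnot
    have hget : ∃ a b : Fin 10, a ≠ b ∧ ¬ Nm.Indep {a,b} ∧ Nm.Indep {a} ∧ Nm.Indep {b} ∧
        (a = x ∨ b = x) := by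
      simp only [mem_insert_iff, mem_singleton_iff] at hx29
      rcases hx29 with rfl | rfl | rfl | rfl | rfl | rfl | rfl | rfl
      · exact ⟨2, 3, by decide, hD23, hI2, hI3, Or.inl rfl⟩
      · exact ⟨2, 3, by decide, hD23, hI2, hI3, Or.inr rfl⟩
      · exact ⟨4, 5, by decide, hD45, hI4, hI5, Or.inl rfl⟩
      · exact ⟨4, 5, by decide, hD45, hI4, hI5, Or.inr rfl⟩
      · exact ⟨6, 7, by decide, hD67, hI6, hI7, Or.inl rfl⟩
      · exact ⟨6, 7, by decide, hD67, hI6, hI7, Or.inr rfl⟩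
      · exact ⟨8, 9, by decide, hD89, hI8, hI9, Or.inl rfl⟩
      · exact ⟨8, 9, by decide, hD89, hI8, hI9, Or.inr rfl⟩
    obtain ⟨a, b, hab, hdep, ha, hb, hax⟩ := hget
    have habC : a ∉ C ∧ b ∉ C := by
      rcases hax with rfl | rfl
      · refine ⟨hxC, fun hbC => hxC ?_⟩
        exact pmem b a hab.symm (by rw [Set.pair_comm]; exact hdep) hb ha C hC hbC
      · refine ⟨fun haC => hxC (pmem a b hab hdep ha hb C hC haC), hxC⟩
    refine ⟨a, b, hab, ?_⟩
    have hCs : C ⊆ univ \ {a,b} := by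
      intro y hy
      refine ⟨mem_univ _, ?_⟩
      intro hyab
      simp only [mem_insert_iff, mem_singleton_iff] at hyab
      rcases hyab with rfl | rfl
      · exact habC.1 hy
      · exact habC.2 hy
    rw [← flat a b hab hdep ha hb]
    exact Nm✶.closure_subset_closure hCs
  constructor
  · intro C hC
    obtain ⟨a, b, hab, hsub⟩ := main C hC
    have h8 : (univ \ ({a,b} : Set (Fin 10))).ncard = 8 := by
      rw [Set.ncard_diff (subset_univ _), Set.ncard_univ, Set.ncard_pair hab]
      simp [Nat.card_eq_fintype_card]
    exact le_trans (Set.ncard_le_ncard hsub (Set.toFinite _)) (le_of_eq h8)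
  · intro C hC heq
    obtain ⟨a, b, hab, hsub⟩ := main C hC
    have ha : a ∈ Nm✶.closure C := by rw [heq, hME]; exact mem_univ _
    exact (hsub ha).2 (mem_insert _ _)


end IPF
end

section
/- The dual M of the vector matroid of N (as in context) contains the 4-element circuit {1,2,3,4}, which has fewer than rank(M) = 7 elements; hence M is not a paving matroid. -/
open Matroid Set

namespace IPF

variable {α : Type*}

lemma card_le_three {Nm : Matroid (Fin 10)} (hN : IsColMatroid Nm Nmat) {I : Set (Fin 10)}
    (hI : Nm.Indep I) : I.ncard ≤ 3 := by
  rw [hN.2] at hI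
  have : Fintype ↥I := Fintype.ofFinite _
  have h := hI.fintype_card_le_finrank
  rw [Module.finrank_fin_fun] at h
  rwa [← Nat.card_coe_set_eq, Nat.card_eq_fintype_card]

noncomputable def sφ : (Fin 3 → ℚ) →ₗ[ℚ] ℚ :=
  (LinearMap.proj 0 : (Fin 3 → ℚ) →ₗ[ℚ] ℚ) + (LinearMap.proj 1 : (Fin 3 → ℚ) →ₗ[ℚ] ℚ)
    + (LinearMap.proj 2 : (Fin 3 → ℚ) →ₗ[ℚ] ℚ)

lemma card_le_two {Nm : Matroid (Fin 10)} (hN : IsColMatroid Nm Nmat) {I : Set (Fin 10)}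
    (hI : Nm.Indep I) (hsub : ∀ j ∈ I, Nmat 0 j + Nmat 1 j + Nmat 2 j = 0) :
    I.ncard ≤ 2 := by
  rw [hN.2] at hI
  have : Fintype ↥I := Fintype.ofFinite _
  have hmem : ∀ j : I, Nmat.transpose (j : Fin 10) ∈ LinearMap.ker sφ := by
    intro j
    rw [LinearMap.mem_ker]
    show Nmat.transpose (j : Fin 10) 0 + Nmat.transpose (j : Fin 10) 1
      + Nmat.transpose (j : Fin 10) 2 = 0
    simpa [Matrix.transpose_apply] using hsub j j.2
  have hli : LinearIndependent ℚ
      (fun j : I => (⟨Nmat.transpose (j : Fin 10), hmem j⟩ : LinearMap.ker sφ)) := by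
    apply LinearIndependent.of_comp (LinearMap.ker sφ).subtype
    exact hI
  have hne : sφ ≠ 0 := by
    intro h
    have h3 : sφ (fun _ => 1) = 0 := by rw [h]; rfl
    norm_num [show sφ (fun _ => (1:ℚ)) = 1+1+1 from rfl] at h3
  have hrk := Module.Dual.finrank_ker_add_one_of_ne_zero hne
  rw [Module.finrank_fin_fun] at hrk
  have h := hli.fintype_card_le_finrank
  rw [← Nat.card_coe_set_eq, Nat.card_eq_fintype_card]
  omega

lemma indep3 {Nm : Matroid (Fin 10)} (hN : IsColMatroid Nm Nmat) (a b c : Fin 10)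
    (hab : a ≠ b) (hac : a ≠ c) (hbc : b ≠ c)
    (hdet : (Matrix.of ![Nmat.transpose a, Nmat.transpose b, Nmat.transpose c]).det ≠ 0) :
    Nm.Indep {a, b, c} := by
  set A : Matrix (Fin 3) (Fin 3) ℚ :=
    Matrix.of ![Nmat.transpose a, Nmat.transpose b, Nmat.transpose c] with hA
  have hliA : LinearIndependent ℚ (fun i => A i) := by
    change LinearIndependent ℚ A.row
    rw [Matrix.linearIndependent_rows_iff_isUnit, Matrix.isUnit_iff_isUnit_det, isUnit_iff_ne_zero]
    exact hdet
  rw [hN.2]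
  set S : Set (Fin 10) := {a, b, c} with hS
  set g : S → Fin 3 := fun x => if (x : Fin 10) = a then 0 else if (x : Fin 10) = b then 1 else 2
    with hg
  have hcases : ∀ x : S, (x : Fin 10) = a ∨ (x : Fin 10) = b ∨ (x : Fin 10) = c := fun x => x.2
  have hval : ∀ x : S, A (g x) = Nmat.transpose (x : Fin 10) := by
    intro x
    rcases hcases x with h | h | h
    · have hgx : g x = 0 := by simp [hg, h]
      rw [hgx, h]; rfl
    · have hgx : g x = 1 := by simp [hg, h, hab.symm]
      rw [hgx, h]; rfl
    · have hgx : g x = 2 := by simp [hg, h, hac.symm, hbc.symm]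
      rw [hgx, h]; rfl
  have hginj : Function.Injective g := by
    intro x y hxy
    apply Subtype.ext
    have hgx : ∀ z : S, ((z:Fin 10) = a ∧ g z = 0) ∨ ((z:Fin 10) = b ∧ g z = 1)
        ∨ ((z:Fin 10) = c ∧ g z = 2) := by
      intro z
      rcases hcases z with h | h | h
      · exact Or.inl ⟨h, by simp [hg, h]⟩
      · exact Or.inr (Or.inl ⟨h, by simp [hg, h, hab.symm]⟩)
      · exact Or.inr (Or.inr ⟨h, by simp [hg, h, hac.symm, hbc.symm]⟩)
    rcases hgx x with ⟨h1,h2⟩|⟨h1,h2⟩|⟨h1,h2⟩ <;> rcases hgx y with ⟨h1',h2'⟩|⟨h1',h2'⟩|⟨h1',h2'⟩ <;>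
      rw [h1, h1'] <;> rw [h2, h2'] at hxy <;>
      first | rfl | exact absurd hxy (by decide)
  have heq : (fun j : S => Nmat.transpose (j : Fin 10)) = (fun i => A i) ∘ g := by
    funext x; exact (hval x).symm
  rw [heq]
  exact hliA.comp g hginj


lemma base_i {Nm : Matroid (Fin 10)} (hN : IsColMatroid Nm Nmat) (i : Fin 10)
    (hi : i = 0 ∨ i = 1 ∨ i = 2 ∨ i = 3) : Nm.IsBase {i, 4, 6} := by
  have hind : Nm.Indep {i, 4, 6} := by
    apply indep3 hN i 4 6
    · rcases hi with h|h|h|h <;> subst h <;> decide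
    · rcases hi with h|h|h|h <;> subst h <;> decide
    · decide
    · rcases hi with h|h|h|h <;> subst h <;>
        · rw [Matrix.det_fin_three]
          norm_num [show ∀ v0 v1 v2 : Fin 3 → ℚ, Matrix.of ![v0,v1,v2] 0 = v0 from fun _ _ _ => rfl,
            show ∀ v0 v1 v2 : Fin 3 → ℚ, Matrix.of ![v0,v1,v2] 1 = v1 from fun _ _ _ => rfl,
            show ∀ v0 v1 v2 : Fin 3 → ℚ, Matrix.of ![v0,v1,v2] 2 = v2 from fun _ _ _ => rfl,
            Matrix.transpose_apply, Matrix.cons_val,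
            show Matrix.vecCons (0:ℚ) (fun i => Matrix.vecCons (0:ℚ) (fun _ : Fin 1 => (-1:ℚ)) i) 2 = -1 from rfl,
            show Nmat 0 0 = 2 from rfl, show Nmat 1 0 = 1 from rfl, show Nmat 2 0 = 0 from rfl,
            show Nmat 0 1 = 1 from rfl, show Nmat 1 1 = 1 from rfl, show Nmat 2 1 = 0 from rfl,
            show Nmat 0 2 = 3 from rfl, show Nmat 1 2 = 1 from rfl, show Nmat 2 2 = 0 from rfl,
            show Nmat 0 3 = 3 from rfl, show Nmat 1 3 = 1 from rfl, show Nmat 2 3 = 0 from rfl,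
            show Nmat 0 4 = -1 from rfl, show Nmat 1 4 = 1 from rfl, show Nmat 2 4 = 0 from rfl,
            show Nmat 0 6 = 0 from rfl, show Nmat 1 6 = 1 from rfl, show Nmat 2 6 = -1 from rfl]
  have hi46 : i ∉ ({4, 6} : Set (Fin 10)) := by
    rcases hi with h|h|h|h <;> subst h <;> decide
  have hcard : ({i, 4, 6} : Set (Fin 10)).ncard = 3 := by
    rw [Set.ncard_insert_of_notMem hi46, Set.ncard_insert_of_notMem (by decide),
      Set.ncard_singleton]
  apply hind.isBase_of_forall_insert
  intro e he hcon
  have h4 := card_le_three hN hcon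
  rw [Set.ncard_insert_of_notMem he.2, hcard] at h4
  omega

lemma base_card {Nm : Matroid (Fin 10)} (hN : IsColMatroid Nm Nmat) {B : Set (Fin 10)}
    (hB : Nm.IsBase B) : B.ncard = 3 := by
  have h0 : Nm.IsBase {0, 4, 6} := base_i hN 0 (Or.inl rfl)
  have h := hB.ncard_eq_ncard_of_isBase h0
  rw [h, Set.ncard_insert_of_notMem (by decide), Set.ncard_insert_of_notMem (by decide),
    Set.ncard_singleton]

/-- The dual `M` of the column matroid of `N` contains the circuit `{e1,e2,e3,e4}`
of fewer than `rank M = 7` elements; hence `M` is not paving. -/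
theorem stmt10 (Nm : Matroid (Fin 10)) (hN : IsColMatroid Nm Nmat) :
    Circuit Nm✶ ({0, 1, 2, 3} : Set (Fin 10)) ∧
      ({0, 1, 2, 3} : Set (Fin 10)).ncard < 7 ∧ HasRank Nm✶ 7 ∧
      ¬ IsPaving Nm✶ := by
  have hE : Nm.E = univ := hN.1
  have hC4 : ({0, 1, 2, 3} : Set (Fin 10)).ncard = 4 := by
    rw [Set.ncard_insert_of_notMem (by decide), Set.ncard_insert_of_notMem (by decide),
      Set.ncard_insert_of_notMem (by decide), Set.ncard_singleton]
  have hrank : HasRank Nm✶ 7 := by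
    intro B hB
    rw [Matroid.dual_isBase_iff'] at hB
    obtain ⟨hB1, hB2⟩ := hB
    have h3 : (Nm.E \ B).ncard = 3 := base_card hN hB1
    rw [hE] at h3 hB2
    have hB10 : B.ncard ≤ 10 := by
      calc B.ncard ≤ (univ : Set (Fin 10)).ncard := Set.ncard_le_ncard (subset_univ B)
        _ = 10 := by rw [Set.ncard_univ]; simp
    rw [Set.ncard_diff hB2, Set.ncard_univ] at h3
    simp only [Nat.card_eq_fintype_card, Fintype.card_fin] at h3
    omega
  have hcirc : Circuit Nm✶ ({0, 1, 2, 3} : Set (Fin 10)) := by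
    refine ⟨by simp [hE], ?_, ?_⟩
    · intro hind
      rw [Matroid.dual_indep_iff_exists'] at hind
      obtain ⟨-, B, hB, hdisj⟩ := hind
      have hsum : ∀ j ∈ B, Nmat 0 j + Nmat 1 j + Nmat 2 j = 0 := by
        intro j hj
        have hj4 : j ∉ ({0, 1, 2, 3} : Set (Fin 10)) := fun h => hdisj.ne_of_mem h hj rfl
        simp only [Set.mem_insert_iff, Set.mem_singleton_iff, not_or] at hj4
        obtain ⟨j0, j1, j2, j3⟩ := hj4
        rcases j with ⟨v, hv⟩
        have hv' : v = 4 ∨ v = 5 ∨ v = 6 ∨ v = 7 ∨ v = 8 ∨ v = 9 := by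
          have hvals : v ≠ 0 ∧ v ≠ 1 ∧ v ≠ 2 ∧ v ≠ 3 := by
            refine ⟨fun h => j0 ?_, fun h => j1 ?_, fun h => j2 ?_, fun h => j3 ?_⟩ <;>
              subst h <;> rfl
          omega
        rcases hv' with rfl|rfl|rfl|rfl|rfl|rfl
        · show (-1:ℚ) + 1 + 0 = 0; norm_num
        · show (-1:ℚ) + 1 + 0 = 0; norm_num
        · show (0:ℚ) + 1 + (-1) = 0; norm_num
        · show (0:ℚ) + 1 + (-1) = 0; norm_num
        · show (-1:ℚ) + 0 + 1 = 0; norm_num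
        · show (-1:ℚ) + 0 + 1 = 0; norm_num
      have h2 := card_le_two hN hB.indep hsum
      have h3 := base_card hN hB
      omega
    · intro D hD
      obtain ⟨x, hxC, hxD⟩ := exists_of_ssubset hD
      have hDsub : D ⊆ ({0, 1, 2, 3} : Set (Fin 10)) \ {x} := fun y hy =>
        ⟨hD.1 hy, fun h => hxD (Set.mem_singleton_iff.mp h ▸ hy)⟩
      have hx : x = 0 ∨ x = 1 ∨ x = 2 ∨ x = 3 := by simpa using hxC
      have hBx : Nm.IsBase {x, 4, 6} := base_i hN x hx
      have hindCx : Nm✶.Indep (({0, 1, 2, 3} : Set (Fin 10)) \ {x}) := by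
        rw [Matroid.dual_indep_iff_exists']
        refine ⟨by simp [hE], {x, 4, 6}, hBx, ?_⟩
        rw [Set.disjoint_left]
        rintro y ⟨hy1, hy2⟩ hy3
        simp only [Set.mem_insert_iff, Set.mem_singleton_iff] at hy1 hy3
        simp only [Set.mem_singleton_iff] at hy2
        rcases hy3 with h|h|h
        · exact hy2 h
        · subst h; rcases hy1 with h|h|h|h <;> simp_all
        · subst h; rcases hy1 with h|h|h|h <;> simp_all
      exact hindCx.subset hDsub
  refine ⟨hcirc, by rw [hC4]; omega, hrank, ?_⟩
  intro hpav
  obtain ⟨B, hB⟩ := Nm✶.exists_isBase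
  have hle := hpav _ hcirc B hB
  rw [hC4, hrank B hB] at hle
  omega

end IPF
end

section
/- For each r ≥ 1, with the graphs G_r as defined and edges ordered by their order of introduction (edges of G_{r-1} first, then edge (r,r+1) as 2r-1, then edge (1,r+1) as 2r), every basis B of M(G_r) for r > 1 has exactly one of the forms: (i) B = B' ∪ {2r-1} with B' a basis of M(G_{r-1}); (ii) B = B' ∪ {2r} with B' a basis of M(G_{r-1}); (iii) B = (B' \ {2r-2}) ∪ {2r-1, 2r} with B' a basis of M(G_{r-1}) containing 2r-2. -/
open Matroid Set

namespace IPF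

variable {α : Type*}

-- AUX START
lemma incG_even {j : ℕ} (hj : 1 ≤ j) : incG (2 * j) = s(1, j + 1) := by
  rcases Nat.lt_or_ge j 2 with h | h
  · have hj1 : j = 1 := by omega
    subst hj1; simp [incG]
  · have h1 : ¬ (2 * j ≤ 2) := by omega
    have h2 : ¬ ((2 * j) % 2 = 1) := by omega
    simp only [incG, if_neg h1, if_neg h2]
    have : (2 * j + 2) / 2 = j + 1 := by omega
    rw [this]

lemma incG_odd {j : ℕ} (hj : 2 ≤ j) : incG (2 * j - 1) = s(j, j + 1) := by
  have h1 : ¬ (2 * j - 1 ≤ 2) := by omega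
  have h2 : (2 * j - 1) % 2 = 1 := by omega
  simp only [incG, if_neg h1, if_pos h2]
  have e1 : (2 * j - 1 + 1) / 2 = j := by omega
  have e2 : (2 * j - 1 + 3) / 2 = j + 1 := by omega
  rw [e1, e2]

lemma mem_incG_bound {n e v : ℕ} (he : e ∈ Set.Icc 1 (2 * n)) (hv : v ∈ incG e) :
    v ∈ Set.Icc 1 (n + 1) := by
  simp only [Set.mem_Icc] at he ⊢
  unfold incG at hv
  split_ifs at hv <;> rw [Sym2.mem_iff] at hv <;> rcases hv with h | h <;> omega

lemma vset_subset {n : ℕ} {J : Set ℕ} (hJ : J ⊆ Set.Icc 1 (2 * n)) :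
    {v | ∃ e ∈ J, v ∈ incG e} ⊆ Set.Icc 1 (n + 1) := by
  rintro v ⟨e, he, hv⟩
  exact mem_incG_bound (hJ he) hv

lemma forest_ncard_le {n : ℕ} {I : Set ℕ} (hI : I ⊆ Set.Icc 1 (2 * n))
    (hf : IsForest incG I) : I.ncard ≤ n := by
  have hfin : I.Finite := (Set.finite_Icc 1 (2 * n)).subset hI
  rcases I.eq_empty_or_nonempty with h | h
  · simp [h]
  have h1 := hf I Subset.rfl hfin h
  have h2 : {v | ∃ e ∈ I, v ∈ incG e}.ncard ≤ (Set.Icc 1 (n + 1)).ncard :=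
    Set.ncard_le_ncard (vset_subset hI) (Set.finite_Icc _ _)
  have h3 : (Set.Icc 1 (n + 1)).ncard = n + 1 := by
    rw [← Finset.coe_Icc, Set.ncard_coe_finset, Nat.card_Icc]; omega
  omega

lemma star_forest (n : ℕ) : IsForest incG ((fun j => 2 * j) '' Set.Icc 1 n) := by
  intro J hJ hfin hne
  have key : ∀ e ∈ J, incG e = s(1, e / 2 + 1) ∧ 2 ≤ e ∧ e % 2 = 0 := by
    intro e he
    obtain ⟨j, hj, he⟩ := hJ he
    have he2 : e = 2 * j := he.symm
    subst he2
    simp only [Set.mem_Icc] at hj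
    have h2j : 2 * j / 2 = j := by omega
    exact ⟨by rw [incG_even hj.1, h2j], by omega, by omega⟩
  have hinj : Set.InjOn (fun e => e / 2 + 1) J := by
    intro x hx y hy hxy
    have h1 := (key x hx).2
    have h2 := (key y hy).2
    simp only at hxy
    omega
  have hsub : insert 1 ((fun e => e / 2 + 1) '' J) ⊆ {v | ∃ e ∈ J, v ∈ incG e} := by
    rintro v (rfl | ⟨e, he, rfl⟩)
    · obtain ⟨e, he⟩ := hne
      exact ⟨e, he, by rw [(key e he).1]; exact Sym2.mem_mk_left _ _⟩
    · exact ⟨e, he, by rw [(key e he).1]; exact Sym2.mem_mk_right _ _⟩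
  have h1 : (1 : ℕ) ∉ (fun e => e / 2 + 1) '' J := by
    rintro ⟨e, he, hfe⟩
    have := (key e he).2.1
    simp only at hfe
    omega
  have hJn : J ⊆ Set.Icc 1 (2 * n) := by
    intro e he
    obtain ⟨j, hj, rfl⟩ := hJ he
    simp only [Set.mem_Icc] at hj ⊢
    omega
  have hVfin : {v | ∃ e ∈ J, v ∈ incG e}.Finite :=
    (Set.finite_Icc 1 (n + 1)).subset (vset_subset hJn)
  have h2 : (insert 1 ((fun e => e / 2 + 1) '' J)).ncard ≤ {v | ∃ e ∈ J, v ∈ incG e}.ncard :=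
    Set.ncard_le_ncard hsub hVfin
  rw [Set.ncard_insert_of_notMem h1 (hfin.image _), Set.ncard_image_of_injOn hinj] at h2
  omega

lemma base_iff_card {n : ℕ} {M : Matroid ℕ}
    (hM : IsCycleMatroidOn M (Set.Icc 1 (2 * n)) incG) {B : Set ℕ} :
    M.IsBase B ↔ M.Indep B ∧ B.ncard = n := by
  set S : Set ℕ := (fun j => 2 * j) '' Set.Icc 1 n with hS
  have hSsub : S ⊆ Set.Icc 1 (2 * n) := by
    rintro e ⟨j, hj, rfl⟩
    simp only [Set.mem_Icc] at hj ⊢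
    omega
  have hSindep : M.Indep S := (hM.2 _).2 ⟨hSsub, star_forest n⟩
  have hScard : S.ncard = n := by
    rw [hS, Set.ncard_image_of_injOn (fun x _ y _ h => by
        have h' : 2 * x = 2 * y := h; omega),
      ← Finset.coe_Icc, Set.ncard_coe_finset, Nat.card_Icc]
    omega
  have hub : ∀ I, M.Indep I → I.ncard ≤ n := by
    intro I hI
    obtain ⟨hIs, hIf⟩ := (hM.2 I).1 hI
    exact forest_ncard_le hIs hIf
  have hfin : ∀ I : Set ℕ, M.Indep I → I.Finite := fun I hI =>
    (Set.finite_Icc 1 (2 * n)).subset ((hM.2 I).1 hI).1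
  have hSbase : M.IsBase S := by
    rw [Matroid.isBase_iff_maximal_indep]
    refine ⟨hSindep, fun I hI hsub => ?_⟩
    exact (Set.eq_of_subset_of_ncard_le hsub (by rw [hScard]; exact hub I hI)
      (hfin I hI)).symm.subset
  constructor
  · intro hB
    exact ⟨hB.indep, by rw [hB.ncard_eq_ncard_of_isBase hSbase, hScard]⟩
  · rintro ⟨hI, hcard⟩
    obtain ⟨B', hB', hsub⟩ := hI.exists_isBase_superset
    have hB'c : B'.ncard = n := by rw [hB'.ncard_eq_ncard_of_isBase hSbase, hScard]
    rwa [Set.eq_of_subset_of_ncard_le hsub (by omega) (hfin _ hB'.indep)]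

lemma swap_forest {r : ℕ} (hr : 2 ≤ r) {B : Set ℕ} (hBsub : B ⊆ Set.Icc 1 (2 * r))
    (hBfor : IsForest incG B) (ha : 2 * r - 1 ∈ B) (hb : 2 * r ∈ B) :
    IsForest incG (insert (2 * r - 2) (B \ {2 * r - 1, 2 * r})) := by
  have hia : incG (2 * r - 1) = s(r, r + 1) := incG_odd hr
  have hib : incG (2 * r) = s(1, r + 1) := incG_even (by omega)
  have hic : incG (2 * r - 2) = s(1, r) := by
    have h1 : 2 * (r - 1) = 2 * r - 2 := by omega
    have h2 : r - 1 + 1 = r := by omega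
    rw [← h1, incG_even (by omega), h2]
  intro J hJ hJfin hJne
  by_cases hcJ : 2 * r - 2 ∈ J
  swap
  · apply hBfor J _ hJfin hJne
    intro x hx
    rcases hJ hx with rfl | hx'
    · exact absurd hx hcJ
    · exact hx'.1
  · have haJ : 2 * r - 1 ∉ J := by
      intro h
      rcases hJ h with h' | h'
      · omega
      · exact h'.2 (Or.inl rfl)
    have hbJ : 2 * r ∉ J := by
      intro h
      rcases hJ h with h' | h'
      · omega
      · exact h'.2 (Or.inr rfl)
    set K : Set ℕ := insert (2 * r - 1) (insert (2 * r) (J \ {2 * r - 2})) with hK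
    have hKB : K ⊆ B := by
      rintro x (rfl | rfl | ⟨hx, hx2⟩)
      · exact ha
      · exact hb
      · rcases hJ hx with rfl | hx'
        · exact absurd rfl hx2
        · exact hx'.1
    have hKfin : K.Finite := (hJfin.diff.insert _).insert _
    have hKne : K.Nonempty := ⟨2 * r - 1, Set.mem_insert _ _⟩
    have hKlt := hBfor K hKB hKfin hKne
    have hKcard : K.ncard = J.ncard + 1 := by
      have hJ1 : 1 ≤ J.ncard := (Set.ncard_pos hJfin).2 hJne
      have e1 : (J \ {2 * r - 2}).ncard = J.ncard - 1 :=
        Set.ncard_diff_singleton_of_mem hcJ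
      have m1 : 2 * r ∉ J \ {2 * r - 2} := fun h => hbJ h.1
      have m2 : 2 * r - 1 ∉ insert (2 * r) (J \ {2 * r - 2}) := by
        rintro (h | h)
        · omega
        · exact haJ h.1
      rw [hK, Set.ncard_insert_of_notMem m2 (hJfin.diff.insert _),
        Set.ncard_insert_of_notMem m1 hJfin.diff, e1]
      omega
    have hrJ : r ∈ {v | ∃ e ∈ J, v ∈ incG e} :=
      ⟨2 * r - 2, hcJ, by rw [hic]; exact Sym2.mem_mk_right _ _⟩
    have h1J : 1 ∈ {v | ∃ e ∈ J, v ∈ incG e} :=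
      ⟨2 * r - 2, hcJ, by rw [hic]; exact Sym2.mem_mk_left _ _⟩
    have hVK : {v | ∃ e ∈ K, v ∈ incG e} ⊆ insert (r + 1) {v | ∃ e ∈ J, v ∈ incG e} := by
      rintro v ⟨e, he, hv⟩
      rcases he with rfl | rfl | he'
      · rw [hia, Sym2.mem_iff] at hv
        rcases hv with rfl | rfl
        · exact Or.inr hrJ
        · exact Or.inl rfl
      · rw [hib, Sym2.mem_iff] at hv
        rcases hv with rfl | rfl
        · exact Or.inr h1J
        · exact Or.inl rfl
      · exact Or.inr ⟨e, he'.1, hv⟩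
    have hJsub : J ⊆ Set.Icc 1 (2 * r) := by
      intro x hx
      rcases hJ hx with rfl | hx'
      · simp only [Set.mem_Icc]; omega
      · exact hBsub hx'.1
    have hVJfin : {v | ∃ e ∈ J, v ∈ incG e}.Finite :=
      (Set.finite_Icc 1 (r + 1)).subset (vset_subset hJsub)
    have h2 : {v | ∃ e ∈ K, v ∈ incG e}.ncard ≤
        (insert (r + 1) {v | ∃ e ∈ J, v ∈ incG e}).ncard :=
      Set.ncard_le_ncard hVK (hVJfin.insert _)
    have h3 := Set.ncard_insert_le (r + 1) {v | ∃ e ∈ J, v ∈ incG e}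
    omega
-- AUX END

/-- For `r > 1`, every base of `M(G_r)` has exactly one of the three forms
(i) `B' ∪ {2r-1}`, (ii) `B' ∪ {2r}`, (iii) `(B' \ {2r-2}) ∪ {2r-1, 2r}` with
`2r-2 ∈ B'`, where `B'` is a base of `M(G_{r-1})`. -/
theorem stmt18 (r : ℕ) (hr : 2 ≤ r) (M Mp : Matroid ℕ)
    (hM : IsCycleMatroidOn M (Set.Icc 1 (2 * r)) incG)
    (hMp : IsCycleMatroidOn Mp (Set.Icc 1 (2 * r - 2)) incG) :
    ∀ B, M.IsBase B →
      ((∃ B', Mp.IsBase B' ∧ B = insert (2 * r - 1) B') ∨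
        (∃ B', Mp.IsBase B' ∧ B = insert (2 * r) B') ∨
        (∃ B', Mp.IsBase B' ∧ 2 * r - 2 ∈ B' ∧
          B = insert (2 * r - 1) (insert (2 * r) (B' \ {2 * r - 2})))) ∧
      ¬ ((∃ B', Mp.IsBase B' ∧ B = insert (2 * r - 1) B') ∧
          (∃ B', Mp.IsBase B' ∧ B = insert (2 * r) B')) ∧
      ¬ ((∃ B', Mp.IsBase B' ∧ B = insert (2 * r - 1) B') ∧
          (∃ B', Mp.IsBase B' ∧ 2 * r - 2 ∈ B' ∧
            B = insert (2 * r - 1) (insert (2 * r) (B' \ {2 * r - 2})))) ∧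
      ¬ ((∃ B', Mp.IsBase B' ∧ B = insert (2 * r) B') ∧
          (∃ B', Mp.IsBase B' ∧ 2 * r - 2 ∈ B' ∧
            B = insert (2 * r - 1) (insert (2 * r) (B' \ {2 * r - 2})))) := by
  have h2 : 2 * (r - 1) = 2 * r - 2 := by omega
  rw [← h2] at hMp
  intro B hB
  obtain ⟨hBind, hBcard⟩ := (base_iff_card hM).1 hB
  obtain ⟨hBsub, hBfor⟩ := (hM.2 B).1 hBind
  have hBfin : B.Finite := (Set.finite_Icc 1 (2 * r)).subset hBsub
  -- elements of bases of Mp are at most 2r-2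
  have hle : ∀ B', Mp.IsBase B' → ∀ x ∈ B', x ≤ 2 * r - 2 := by
    intro B' hB' x hx
    have h := hB'.subset_ground hx
    rw [hMp.1, Set.mem_Icc] at h
    omega
  -- uniqueness parts
  have huniq1 : ¬ ((∃ B', Mp.IsBase B' ∧ B = insert (2 * r - 1) B') ∧
      (∃ B', Mp.IsBase B' ∧ B = insert (2 * r) B')) := by
    rintro ⟨⟨B1, hB1, hBe1⟩, ⟨B2, hB2, hBe2⟩⟩
    have h1 : 2 * r ∈ B := by rw [hBe2]; exact Set.mem_insert _ _
    rw [hBe1] at h1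
    rcases h1 with h | h
    · omega
    · have := hle B1 hB1 _ h; omega
  have huniq2 : ¬ ((∃ B', Mp.IsBase B' ∧ B = insert (2 * r - 1) B') ∧
      (∃ B', Mp.IsBase B' ∧ 2 * r - 2 ∈ B' ∧
        B = insert (2 * r - 1) (insert (2 * r) (B' \ {2 * r - 2})))) := by
    rintro ⟨⟨B1, hB1, hBe1⟩, ⟨B2, hB2, hc2, hBe2⟩⟩
    have h1 : 2 * r ∈ B := by
      rw [hBe2]; exact Set.mem_insert_of_mem _ (Set.mem_insert _ _)
    rw [hBe1] at h1
    rcases h1 with h | h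
    · omega
    · have := hle B1 hB1 _ h; omega
  have huniq3 : ¬ ((∃ B', Mp.IsBase B' ∧ B = insert (2 * r) B') ∧
      (∃ B', Mp.IsBase B' ∧ 2 * r - 2 ∈ B' ∧
        B = insert (2 * r - 1) (insert (2 * r) (B' \ {2 * r - 2})))) := by
    rintro ⟨⟨B1, hB1, hBe1⟩, ⟨B2, hB2, hc2, hBe2⟩⟩
    have h1 : 2 * r - 1 ∈ B := by rw [hBe2]; exact Set.mem_insert _ _
    rw [hBe1] at h1
    rcases h1 with h | h
    · omega
    · have := hle B1 hB1 _ h; omega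
  refine ⟨?_, huniq1, huniq2, huniq3⟩
  by_cases haB : 2 * r - 1 ∈ B
  · by_cases hbB : 2 * r ∈ B
    · -- case (iii)
      have hcB : 2 * r - 2 ∉ B := by
        intro hcB
        have hJsub : ({2 * r - 2, 2 * r - 1, 2 * r} : Set ℕ) ⊆ B := by
          rintro x (rfl | rfl | rfl) <;> assumption
        have h3 := hBfor _ hJsub (Set.toFinite _) ⟨2 * r - 2, Set.mem_insert _ _⟩
        have hia : incG (2 * r - 1) = s(r, r + 1) := incG_odd hr
        have hib : incG (2 * r) = s(1, r + 1) := incG_even (by omega)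
        have hic : incG (2 * r - 2) = s(1, r) := by
          have e1 : 2 * (r - 1) = 2 * r - 2 := by omega
          have e2 : r - 1 + 1 = r := by omega
          rw [← e1, incG_even (by omega), e2]
        have hV : {v | ∃ e ∈ ({2 * r - 2, 2 * r - 1, 2 * r} : Set ℕ), v ∈ incG e} ⊆
            ({1, r, r + 1} : Set ℕ) := by
          rintro v ⟨e, (rfl | rfl | rfl), hv⟩
          · rw [hic, Sym2.mem_iff] at hv
            rcases hv with rfl | rfl
            · exact Or.inl rfl
            · exact Or.inr (Or.inl rfl)
          · rw [hia, Sym2.mem_iff] at hv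
            rcases hv with rfl | rfl
            · exact Or.inr (Or.inl rfl)
            · exact Or.inr (Or.inr rfl)
          · rw [hib, Sym2.mem_iff] at hv
            rcases hv with rfl | rfl
            · exact Or.inl rfl
            · exact Or.inr (Or.inr rfl)
        have hVle : {v | ∃ e ∈ ({2 * r - 2, 2 * r - 1, 2 * r} : Set ℕ), v ∈ incG e}.ncard ≤
            ({1, r, r + 1} : Set ℕ).ncard :=
          Set.ncard_le_ncard hV (Set.toFinite _)
        have hV3 : ({1, r, r + 1} : Set ℕ).ncard ≤ 3 := by
          have g1 := Set.ncard_insert_le 1 ({r, r + 1} : Set ℕ)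
          have g2 := Set.ncard_insert_le r ({r + 1} : Set ℕ)
          have g3 := Set.ncard_singleton (r + 1)
          omega
        have hJ3 : ({2 * r - 2, 2 * r - 1, 2 * r} : Set ℕ).ncard = 3 := by
          rw [Set.ncard_insert_of_notMem (by
              simp only [Set.mem_insert_iff, Set.mem_singleton_iff]; push_neg; omega),
            Set.ncard_insert_of_notMem (by
              simp only [Set.mem_singleton_iff]; omega),
            Set.ncard_singleton]
        omega
      refine Or.inr (Or.inr ⟨insert (2 * r - 2) (B \ {2 * r - 1, 2 * r}), ?_, Set.mem_insert _ _, ?_⟩)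
      · -- it is a base of Mp
        rw [base_iff_card hMp]
        constructor
        · refine (hMp.2 _).2 ⟨?_, swap_forest hr hBsub hBfor haB hbB⟩
          rintro x (rfl | ⟨hx, hx2⟩)
          · simp only [Set.mem_Icc]; omega
          · have h0 := hBsub hx
            simp only [Set.mem_Icc] at h0 ⊢
            simp only [Set.mem_insert_iff, Set.mem_singleton_iff] at hx2
            omega
        · have hcne : 2 * r - 2 ∉ B \ ({2 * r - 1, 2 * r} : Set ℕ) := fun h => hcB h.1
          have habs : ({2 * r - 1, 2 * r} : Set ℕ) ⊆ B := by
            rintro x (rfl | rfl)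
            · exact haB
            · exact hbB
          have hd : (B \ ({2 * r - 1, 2 * r} : Set ℕ)).ncard = r - 2 := by
            rw [Set.ncard_diff habs, hBcard]
            have : ({2 * r - 1, 2 * r} : Set ℕ).ncard = 2 := by
              rw [Set.ncard_insert_of_notMem (by
                  simp only [Set.mem_singleton_iff]; omega),
                Set.ncard_singleton]
            omega
          rw [Set.ncard_insert_of_notMem hcne hBfin.diff, hd]
          omega
      · -- B equality
        have hcB2 : 2 * r - 2 ∉ B \ ({2 * r - 1, 2 * r} : Set ℕ) := fun h => hcB h.1
        rw [Set.insert_diff_self_of_notMem hcB2]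
        ext x
        simp only [Set.mem_insert_iff, Set.mem_diff, Set.mem_insert_iff,
          Set.mem_singleton_iff]
        constructor
        · intro hx
          by_cases h1 : x = 2 * r - 1
          · exact Or.inl h1
          by_cases h2x : x = 2 * r
          · exact Or.inr (Or.inl h2x)
          · exact Or.inr (Or.inr ⟨hx, by tauto⟩)
        · rintro (rfl | rfl | ⟨hx, _⟩) <;> assumption
    · -- case (i)
      refine Or.inl ⟨B \ {2 * r - 1}, ?_, ?_⟩
      · rw [base_iff_card hMp]
        refine ⟨(hMp.2 _).2 ⟨?_, fun J hJ => hBfor J (hJ.trans Set.diff_subset)⟩, ?_⟩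
        · rintro e ⟨he, he2⟩
          have h0 := hBsub he
          simp only [Set.mem_singleton_iff] at he2
          have h3 : e ≠ 2 * r := by rintro rfl; exact hbB he
          simp only [Set.mem_Icc] at h0 ⊢
          omega
        · rw [Set.ncard_diff_singleton_of_mem haB, hBcard]
      · rw [Set.insert_diff_singleton, Set.insert_eq_self.2 haB]
  · by_cases hbB : 2 * r ∈ B
    · -- case (ii)
      refine Or.inr (Or.inl ⟨B \ {2 * r}, ?_, ?_⟩)
      · rw [base_iff_card hMp]
        refine ⟨(hMp.2 _).2 ⟨?_, fun J hJ => hBfor J (hJ.trans Set.diff_subset)⟩, ?_⟩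
        · rintro e ⟨he, he2⟩
          have h0 := hBsub he
          simp only [Set.mem_singleton_iff] at he2
          have h3 : e ≠ 2 * r - 1 := by rintro rfl; exact haB he
          simp only [Set.mem_Icc] at h0 ⊢
          omega
        · rw [Set.ncard_diff_singleton_of_mem hbB, hBcard]
      · rw [Set.insert_diff_singleton, Set.insert_eq_self.2 hbB]
    · -- impossible
      exfalso
      have hsub' : B ⊆ Set.Icc 1 (2 * (r - 1)) := by
        intro e he
        have h0 := hBsub he
        have h3 : e ≠ 2 * r - 1 := by rintro rfl; exact haB he
        have h4 : e ≠ 2 * r := by rintro rfl; exact hbB he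
        simp only [Set.mem_Icc] at h0 ⊢
        omega
      have := forest_ncard_le hsub' hBfor
      omega


end IPF
end
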